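/- arXiv:2005.03693 — 5 statements merged into one kernel-verified Lean document; each statement's English description precedes it below -/
import Mathlib

section
/- The map assigning to each ≿ ∈ R̄ its normalized utility function u(≿) ∈ 𝒰̄ is continuous, and the correspondence assigning to each ≿ ∈ R̄ the set of beliefs representing it is upper hemicontinuous. Concretely: if a sequence (≿^n) in R̄ converges to ≿ ∈ R̄, then u(≿^n) converges to u(≿) in 𝒰̄; and if in addition beliefs π^n representing ≿^n converge uniformly to some π' ∈ Π, then π' represents ≿. -/
open MeasureTheory

/-- An act: a measurable map from states to outcomes. -/
abbrev Act (Ω O : Type*) [MeasurableSpace Ω] [MeasurableSpace O] : Type _ :=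
  {f : Ω → O // Measurable f}

/-- Non-atomicity of a measure relative to an explicit σ-algebra `m'`:
for every `m'`-measurable set of positive measure there is an `m'`-measurable
subset of strictly smaller positive measure. -/
def NonatomicOn {Ω : Type*} [MeasurableSpace Ω] (π : MeasureTheory.Measure Ω)
    (m' : MeasurableSpace Ω) : Prop :=
  ∀ E : Set Ω, MeasurableSet[m'] E → 0 < π E →
    ∃ F : Set Ω, MeasurableSet[m'] F ∧ F ⊆ E ∧ 0 < π F ∧ π F < π E

section Framework

variable {Ω O I : Type*} [mΩ : MeasurableSpace Ω] [mO : MeasurableSpace O]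

/-- A belief: a non-atomic (countably additive) probability measure. -/
def IsBelief (π : Measure Ω) : Prop :=
  IsProbabilityMeasure π ∧ NonatomicOn π mΩ

/-- A utility function: a bounded measurable function on outcomes. -/
def IsUtility (u : O → ℝ) : Prop :=
  Measurable u ∧ ∃ M : ℝ, ∀ x, |u x| ≤ M

/-- A normalized utility function: measurable with infimum 0 and supremum 1. -/
def NormalizedUtility (u : O → ℝ) : Prop :=
  Measurable u ∧ IsGLB (Set.range u) 0 ∧ IsLUB (Set.range u) 1

/-- Member of `𝒰̄`: normalized or identically zero. -/
def NormalizedUtilityBar (u : O → ℝ) : Prop :=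
  NormalizedUtility u ∨ u = 0

/-- Subjective expected utility of an act. -/
noncomputable def ev (π : Measure Ω) (u : O → ℝ) (f : Act Ω O) : ℝ :=
  ∫ ω, u (f.1 ω) ∂π

/-- Preference relations over acts. -/
abbrev Pref (Ω O : Type*) [MeasurableSpace Ω] [MeasurableSpace O] :=
  Act Ω O → Act Ω O → Prop

/-- `(π, u)` represents `r`: `f ≿ g` iff the expected utility of `f` is at least
that of `g`. -/
def Represents (π : Measure Ω) (u : O → ℝ) (r : Pref Ω O) : Prop :=
  ∀ f g : Act Ω O, r f g ↔ ev π u g ≤ ev π u f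

/-- A normalized representation: a belief together with a normalized (or zero)
utility function representing the relation. -/
def NormRep (π : Measure Ω) (u : O → ℝ) (r : Pref Ω O) : Prop :=
  IsBelief π ∧ NormalizedUtilityBar u ∧ Represents π u r

/-- Membership in `R̄`: the relation maximizes subjective expected utility. -/
def IsSEU (r : Pref Ω O) : Prop :=
  ∃ (π : Measure Ω) (u : O → ℝ), IsBelief π ∧ IsUtility u ∧ Represents π u r

/-- Complete indifference: the relation with empty strict part. -/
def CompletelyIndifferent (r : Pref Ω O) : Prop :=
  ∀ f g : Act Ω O, r f g

/-- `π` is a belief representing `r` (together with some utility function). -/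
def RepresentsBelief (π : Measure Ω) (r : Pref Ω O) : Prop :=
  IsBelief π ∧ ∃ u : O → ℝ, IsUtility u ∧ Represents π u r

/-- A preference profile: every agent's relation is SEU-maximizing. -/
def IsProfile (p : I → Pref Ω O) : Prop := ∀ i, IsSEU (p i)

/-- The completely indifferent relation. -/
def indiffRel : Pref Ω O := fun _ _ => True

open Classical in
/-- `p_{∼i}`: replace agent `i`'s relation by complete indifference. -/
noncomputable def updIndiff (p : I → Pref Ω O) (i : I) : I → Pref Ω O :=
  fun j => if j = i then indiffRel else p j

/-- `p_{∼{i,j}}`. -/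
noncomputable def updIndiffPair (p : I → Pref Ω O) (i j : I) : I → Pref Ω O :=
  updIndiff (updIndiff p i) j

open Classical in
/-- `I_p`: the set of concerned agents. -/
noncomputable def concerned [Fintype I] (p : I → Pref Ω O) : Finset I :=
  Finset.univ.filter fun i => ¬ CompletelyIndifferent (p i)

/-- Equivalence of utility functions: equality up to a positive affine
transformation. -/
def UEquiv (u v : O → ℝ) : Prop :=
  ∃ a : ℝ, 0 < a ∧ ∃ b : ℝ, ∀ x, u x = a * v x + b

/-- The beliefs `(πa i)_{i ∈ J}` are affinely independent. -/
def BeliefsAffIndep (J : Finset I) (πa : I → Measure Ω) : Prop :=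
  ∀ c : I → ℝ, (∑ i ∈ J, c i) = 0 →
    (∀ E : Set Ω, MeasurableSet E → (∑ i ∈ J, c i * (πa i E).toReal) = 0) →
    ∀ i ∈ J, c i = 0

/-- The utility functions `(ua i)_{i ∈ J}` are linearly independent: no
nontrivial linear combination of them is a constant function. -/
def UtilsLinIndep (J : Finset I) (ua : I → O → ℝ) : Prop :=
  ∀ c : I → ℝ, (∃ b : ℝ, ∀ x, (∑ i ∈ J, c i * ua i x) = b) → ∀ i ∈ J, c i = 0

/-- The profile has non-degenerate beliefs: the beliefs of any pair and any
triple of concerned agents are affinely independent. -/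
def NonDegenerateBeliefs [Fintype I] (p : I → Pref Ω O) (πa : I → Measure Ω) : Prop :=
  ∀ J : Finset I, J ⊆ concerned p → (J.card = 2 ∨ J.card = 3) → BeliefsAffIndep J πa

/-- The profile has non-degenerate utilities: the utility functions of any pair
and any triple of concerned agents are linearly independent. -/
def NonDegenerateUtils [Fintype I] (p : I → Pref Ω O) (ua : I → O → ℝ) : Prop :=
  ∀ J : Finset I, J ⊆ concerned p → (J.card = 2 ∨ J.card = 3) → UtilsLinIndep J ua

/-- The belief dimension of the beliefs `(πa i)_{i ∈ J}` is at least `n`. -/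
def BeliefDimAtLeast (n : ℕ) (J : Finset I) (πa : I → Measure Ω) : Prop :=
  ∃ E : Fin n → Set Ω, (∀ k, MeasurableSet (E k)) ∧
    ∀ c : Fin n → ℝ, (∀ i ∈ J, (∑ k, c k * (πa i (E k)).toReal) = 0) → ∀ k, c k = 0

/-- The utility dimension of the utility functions `(ua i)_{i ∈ J}` is at
least `n`. -/
def UtilDimAtLeast (n : ℕ) (J : Finset I) (ua : I → O → ℝ) : Prop :=
  ∃ q : Fin n → Measure O, (∀ k, IsProbabilityMeasure (q k)) ∧
    ∀ c : Fin n → ℝ, (∀ i ∈ J, (∑ k, c k * ∫ x, ua i x ∂(q k)) = 0) → ∀ k, c k = 0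

open Classical in
/-- The expected utility function of an SEU relation (via a choice of a
normalized representation). -/
noncomputable def evOf (r : Pref Ω O) : Act Ω O → ℝ :=
  if h : ∃ π : Measure Ω, ∃ u : O → ℝ, NormRep π u r then
    fun f => ev h.choose h.choose_spec.choose f
  else fun _ => 0

/-- The uniform metric on `R`. -/
noncomputable def prefDist (r r' : Pref Ω O) : ℝ :=
  ⨆ f : Act Ω O, |evOf r f - evOf r' f|

/-- Continuity of a real-valued function on `R` with respect to the uniform
metric. -/
def ContOnR (h : Pref Ω O → ℝ) : Prop :=
  ∀ r : Pref Ω O, IsSEU r → ¬ CompletelyIndifferent r →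
    ∀ ε : ℝ, 0 < ε → ∃ δ : ℝ, 0 < δ ∧
      ∀ r' : Pref Ω O, IsSEU r' → ¬ CompletelyIndifferent r' →
        prefDist r r' < δ → |h r' - h r| < ε

/-- Open sets of `R̄`: the whole space `R̄` together with the metrically open
subsets of `R`. -/
def OpenInRbar (S : Set (Pref Ω O)) : Prop :=
  S = {r | IsSEU r} ∨
    ∀ r ∈ S, IsSEU r ∧ ¬ CompletelyIndifferent r ∧
      ∃ ε : ℝ, 0 < ε ∧ ∀ r' : Pref Ω O, IsSEU r' → ¬ CompletelyIndifferent r' →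
        prefDist r r' < ε → r' ∈ S

/-- Restricted monotonicity (on a domain `D` of profiles). -/
def RestrictedMonotonicityOn (D : (I → Pref Ω O) → Prop)
    (Φ : (I → Pref Ω O) → Pref Ω O) : Prop :=
  ∀ (i : I) (p : I → Pref Ω O), D p →
    ∀ πsi πi : Measure Ω,
      RepresentsBelief πsi (Φ (updIndiff p i)) → RepresentsBelief πi (p i) →
      ∀ f g : Act Ω O,
        Φ (updIndiff p i) f g → Φ (updIndiff p i) g f →
        Measure.map f.1 πsi = Measure.map f.1 πi →
        Measure.map g.1 πsi = Measure.map g.1 πi →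
        (p i f g → Φ p f g) ∧ ((p i f g ∧ ¬ p i g f) → (Φ p f g ∧ ¬ Φ p g f))

abbrev RestrictedMonotonicity (Φ : (I → Pref Ω O) → Pref Ω O) : Prop :=
  RestrictedMonotonicityOn IsProfile Φ

/-- Faithfulness (on a domain `D`). -/
def FaithfulOn (D : (I → Pref Ω O) → Prop) (Φ : (I → Pref Ω O) → Pref Ω O) : Prop :=
  ∀ p : I → Pref Ω O, D p → (∀ i, CompletelyIndifferent (p i)) →
    CompletelyIndifferent (Φ p)

abbrev Faithful (Φ : (I → Pref Ω O) → Pref Ω O) : Prop := FaithfulOn IsProfile Φ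

/-- No belief imposition (on a domain `D`). -/
def NoBeliefImpositionOn (D : (I → Pref Ω O) → Prop)
    (Φ : (I → Pref Ω O) → Pref Ω O) : Prop :=
  ∀ (i : I) (p : I → Pref Ω O), D p →
    ¬ CompletelyIndifferent (Φ (updIndiff p i)) →
    ¬ CompletelyIndifferent (Φ p) →
    ¬ CompletelyIndifferent (p i) →
    ∀ πsi π πi : Measure Ω,
      RepresentsBelief πsi (Φ (updIndiff p i)) →
      RepresentsBelief π (Φ p) → RepresentsBelief πi (p i) →
      πsi ≠ πi → π ≠ πi

abbrev NoBeliefImposition (Φ : (I → Pref Ω O) → Pref Ω O) : Prop :=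
  NoBeliefImpositionOn IsProfile Φ

/-- Continuity of an SWF (on a domain `D`), with respect to the topology of
`R̄` and the product topology on profiles. -/
def ContinuousSWFOn (D : (I → Pref Ω O) → Prop)
    (Φ : (I → Pref Ω O) → Pref Ω O) : Prop :=
  ∀ S : Set (Pref Ω O), OpenInRbar S →
    ∀ p : I → Pref Ω O, D p → Φ p ∈ S →
      ∃ T : I → Set (Pref Ω O), (∀ i, OpenInRbar (T i)) ∧ (∀ i, p i ∈ T i) ∧
        ∀ q : I → Pref Ω O, D q → (∀ i, q i ∈ T i) → Φ q ∈ S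

abbrev ContinuousSWF (Φ : (I → Pref Ω O) → Pref Ω O) : Prop :=
  ContinuousSWFOn IsProfile Φ

/-- Anonymity (on a domain `D`). -/
def AnonymousOn (D : (I → Pref Ω O) → Prop)
    (Φ : (I → Pref Ω O) → Pref Ω O) : Prop :=
  ∀ p : I → Pref Ω O, D p → ∀ η : Equiv.Perm I, Φ (fun i => p (η i)) = Φ p

abbrev Anonymous (Φ : (I → Pref Ω O) → Pref Ω O) : Prop := AnonymousOn IsProfile Φ

/-- The regular set of acts `𝒜(ℰ', O')`. -/
def RegularActs (m' : MeasurableSpace Ω) (O' : Set O) : Set (@Act Ω O mΩ mO) :=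
  {f : @Act Ω O mΩ mO | @Measurable Ω O m' mO f.1 ∧ Set.range f.1 ⊆ O'}

/-- `𝒜(ℰ', O')` is co-redundant for `p` (with representing beliefs `πa`). -/
def CoRedundant (m' : MeasurableSpace Ω) (O' : Set O)
    (p : I → @Pref Ω O mΩ mO) (πa : I → @MeasureTheory.Measure Ω mΩ) : Prop :=
  (∀ f : @Act Ω O mΩ mO, ∃ g ∈ @RegularActs Ω O mΩ mO m' O', ∀ i, p i f g ∧ p i g f) ∧
  (∀ i, @NonatomicOn Ω mΩ (πa i) m')

/-- Independence of redundant acts (on a domain `D`). -/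
def IndepRedundantActsOn (D : (I → Pref Ω O) → Prop)
    (Φ : (I → Pref Ω O) → Pref Ω O) : Prop :=
  ∀ (p p' : I → Pref Ω O) (πa πa' : I → Measure Ω),
    D p → D p' →
    (∀ i, RepresentsBelief (πa i) (p i)) →
    (∀ i, RepresentsBelief (πa' i) (p' i)) →
    ∀ (m' : {m : MeasurableSpace Ω // m ≤ mΩ}) (O' : Set O),
      CoRedundant m'.1 O' p πa → CoRedundant m'.1 O' p' πa' →
      (∀ i : I, ∀ f ∈ RegularActs m'.1 O', ∀ g ∈ RegularActs m'.1 O',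
        (p i f g ↔ p' i f g)) →
      ∀ f ∈ RegularActs m'.1 O', ∀ g ∈ RegularActs m'.1 O',
        (Φ p f g ↔ Φ p' f g)

abbrev IndepRedundantActs (Φ : (I → Pref Ω O) → Pref Ω O) : Prop :=
  IndepRedundantActsOn IsProfile Φ

/-- The weighted average of the concerned agents' beliefs with weights `v`. -/
noncomputable def mixBelief [Fintype I] (p : I → Pref Ω O) (πa : I → Measure Ω)
    (v : I → ℝ) : Measure Ω :=
  (ENNReal.ofReal ((∑ i ∈ concerned p, v i)⁻¹)) •
    ∑ i ∈ concerned p, ENNReal.ofReal (v i) • πa i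

/-- The weighted sum of the concerned agents' utility functions with weights
`w`. -/
noncomputable def mixUtil [Fintype I] (p : I → Pref Ω O) (ua : I → O → ℝ)
    (w : I → ℝ) : O → ℝ :=
  fun x => ∑ i ∈ concerned p, w i * ua i x

/-- A common utility profile: every concerned agent's normalized utility
function is equivalent to `u` or to `-u` for a single `u ∈ 𝒰`. -/
def CommonUtilityProfile [Fintype I] (p : I → Pref Ω O) (ua : I → O → ℝ) : Prop :=
  ∃ u : O → ℝ, NormalizedUtility u ∧
    ∀ i ∈ concerned p, UEquiv (ua i) u ∨ UEquiv (ua i) (fun x => - u x)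

end Framework

section Aux

variable {Ω O : Type*} [mΩ : MeasurableSpace Ω] [mO : MeasurableSpace O]

lemma ev_const_act (π : Measure Ω) [IsProbabilityMeasure π] (u : O → ℝ) (x : O) :
    ev π u ⟨fun _ => x, measurable_const⟩ = u x := by
  simp [ev]

lemma ev_piecewise (π : Measure Ω) [IsProbabilityMeasure π] (u : O → ℝ) {E : Set Ω}
    [DecidablePred (· ∈ E)] (hE : MeasurableSet E) (x y : O) :
    ev π u ⟨E.piecewise (fun _ => x) (fun _ => y),
      Measurable.piecewise hE measurable_const measurable_const⟩
      = (u x - u y) * (π E).toReal + u y := by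
  have h : (fun ω => u (E.piecewise (fun _ => x) (fun _ => y) ω))
      = fun ω => E.indicator (fun _ => u x - u y) ω + u y := by
    funext ω
    by_cases hω : ω ∈ E <;> simp [Set.piecewise, Set.indicator, hω]
  show (∫ ω, u (E.piecewise (fun _ => x) (fun _ => y) ω) ∂π) = _
  rw [h, MeasureTheory.integral_add ((integrable_const _).indicator hE) (integrable_const _),
    MeasureTheory.integral_indicator_const _ hE, MeasureTheory.integral_const]
  simp [mul_comm, Measure.real]

lemma rep_zero_CI {π : Measure Ω} {r : Pref Ω O}
    (h : Represents π (0 : O → ℝ) r) : CompletelyIndifferent r := by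
  intro f g
  rw [h f g]
  simp [ev]

lemma CI_norm_false [Nonempty O] {π : Measure Ω} [IsProbabilityMeasure π]
    {u : O → ℝ} {r : Pref Ω O} (hu : NormalizedUtility u)
    (hrep : Represents π u r) (hCI : CompletelyIndifferent r) : False := by
  have hconst : ∀ x y : O, u x = u y := by
    intro x y
    have h1 := (hrep ⟨fun _ => x, measurable_const⟩ ⟨fun _ => y, measurable_const⟩).mp
      (hCI _ _)
    have h2 := (hrep ⟨fun _ => y, measurable_const⟩ ⟨fun _ => x, measurable_const⟩).mp
      (hCI _ _)
    rw [ev_const_act, ev_const_act] at h1 h2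
    linarith
  obtain ⟨x0⟩ := ‹Nonempty O›
  have hrange : Set.range u = {u x0} := by
    ext t
    simp only [Set.mem_range, Set.mem_singleton_iff]
    exact ⟨fun ⟨x, hx⟩ => hx ▸ hconst x x0, fun ht => ⟨x0, ht.symm⟩⟩
  have h0 : (0 : ℝ) = u x0 := (hrange ▸ hu.2.1).unique isGLB_singleton
  have h1 : (1 : ℝ) = u x0 := (hrange ▸ hu.2.2).unique isLUB_singleton
  linarith

end Aux

theorem stmt9 {Ω O : Type*} [mΩ : MeasurableSpace Ω] [mO : MeasurableSpace O]
    (hO : 4 ≤ Cardinal.mk O)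
    (rn : ℕ → Pref Ω O) (r : Pref Ω O)
    (πn : ℕ → Measure Ω) (un : ℕ → O → ℝ)
    (hn : ∀ n, NormRep (πn n) (un n) (rn n))
    (πL : Measure Ω) (uL : O → ℝ) (hL : NormRep πL uL r)
    (hconv : CompletelyIndifferent r ∨
      ∀ ε : ℝ, 0 < ε → ∃ N : ℕ, ∀ n ≥ N, ¬ CompletelyIndifferent (rn n) ∧
        ∀ f : Act Ω O, |ev (πn n) (un n) f - ev πL uL f| < ε) :
    (uL = 0 ∨
      ∀ ε : ℝ, 0 < ε → ∃ N : ℕ, ∀ n ≥ N, un n ≠ 0 ∧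
        ∀ x : O, |un n x - uL x| < ε) ∧
    (∀ π' : Measure Ω, IsBelief π' →
      (∀ ε : ℝ, 0 < ε → ∃ N : ℕ, ∀ n ≥ N, ∀ E : Set Ω, MeasurableSet E →
        |(πn n E).toReal - (π' E).toReal| < ε) →
      RepresentsBelief π' r) := by
  classical
  have hOne : Nonempty O := by
    rw [← Cardinal.mk_ne_zero_iff]
    intro h
    rw [h] at hO
    exact absurd hO (by norm_num)
  haveI : IsProbabilityMeasure πL := hL.1.1
  haveI : ∀ n, IsProbabilityMeasure (πn n) := fun n => (hn n).1.1
  constructor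
  · by_cases hCI : CompletelyIndifferent r
    · left
      refine hL.2.1.resolve_left ?_
      intro hnorm
      exact CI_norm_false hnorm hL.2.2 hCI
    · right
      have hP := hconv.resolve_left hCI
      intro ε hε
      obtain ⟨N, hN⟩ := hP ε hε
      refine ⟨N, fun n hn' => ⟨?_, ?_⟩⟩
      · intro h0
        exact (hN n hn').1 (rep_zero_CI (h0 ▸ (hn n).2.2))
      · intro x
        have := (hN n hn').2 ⟨fun _ => x, measurable_const⟩
        rwa [ev_const_act, ev_const_act] at this
  · intro π' hb hπconv
    by_cases hCI : CompletelyIndifferent r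
    · exact ⟨hb, 0, ⟨measurable_const, 1, by simp⟩,
        fun f g => by simp [ev, hCI f g]⟩
    · have hP := hconv.resolve_left hCI
      have hnorm : NormalizedUtility uL := by
        refine hL.2.1.resolve_right ?_
        intro h0
        exact hCI (rep_zero_CI (h0 ▸ hL.2.2))
      -- uL is not constant
      have hne : ∃ x y : O, uL x ≠ uL y := by
        by_contra hc
        push_neg at hc
        obtain ⟨x0⟩ := hOne
        have hrange : Set.range uL = {uL x0} := by
          ext t
          simp only [Set.mem_range, Set.mem_singleton_iff]
          exact ⟨fun ⟨x, hx⟩ => hx ▸ hc x x0, fun ht => ⟨x0, ht.symm⟩⟩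
        have h0 : (0 : ℝ) = uL x0 := (hrange ▸ hnorm.2.1).unique isGLB_singleton
        have h1 : (1 : ℝ) = uL x0 := (hrange ▸ hnorm.2.2).unique isLUB_singleton
        linarith
      obtain ⟨x, y, hxy⟩ := hne
      -- pointwise convergence of utilities
      have hux : ∀ z : O, Filter.Tendsto (fun n => un n z) Filter.atTop (nhds (uL z)) := by
        intro z
        rw [Metric.tendsto_atTop]
        intro ε hε
        obtain ⟨N, hN⟩ := hP ε hε
        refine ⟨N, fun n hn' => ?_⟩
        have := (hN n hn').2 ⟨fun _ => z, measurable_const⟩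
        rw [Real.dist_eq]
        rwa [ev_const_act, ev_const_act] at this
      -- equality of measures on every measurable set
      have hEeq : ∀ E : Set Ω, MeasurableSet E → π' E = πL E := by
        intro E hE
        haveI : DecidablePred (· ∈ E) := Classical.decPred _
        set fE : Act Ω O := ⟨E.piecewise (fun _ => x) (fun _ => y),
          Measurable.piecewise hE measurable_const measurable_const⟩ with hfE
        have hπE : Filter.Tendsto (fun n => ((πn n) E).toReal) Filter.atTop
            (nhds ((π' E).toReal)) := by
          rw [Metric.tendsto_atTop]
          intro ε hε
          obtain ⟨N, hN⟩ := hπconv ε hε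
          exact ⟨N, fun n hn' => by rw [Real.dist_eq]; exact hN n hn' E hE⟩
        have hev1 : Filter.Tendsto (fun n => ev (πn n) (un n) fE) Filter.atTop
            (nhds (ev πL uL fE)) := by
          rw [Metric.tendsto_atTop]
          intro ε hε
          obtain ⟨N, hN⟩ := hP ε hε
          exact ⟨N, fun n hn' => by rw [Real.dist_eq]; exact (hN n hn').2 fE⟩
        have hev2 : Filter.Tendsto (fun n => ev (πn n) (un n) fE) Filter.atTop
            (nhds ((uL x - uL y) * (π' E).toReal + uL y)) := by
          have heq : (fun n => ev (πn n) (un n) fE)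
              = fun n => (un n x - un n y) * ((πn n) E).toReal + un n y := by
            funext n
            exact ev_piecewise (πn n) (un n) hE x y
          rw [heq]
          exact (((hux x).sub (hux y)).mul hπE).add (hux y)
        have hlim := tendsto_nhds_unique hev1 hev2
        rw [ev_piecewise πL uL hE x y] at hlim
        have hreal : (π' E).toReal = (πL E).toReal := by
          have ha : uL x - uL y ≠ 0 := sub_ne_zero.mpr hxy
          have := mul_left_cancel₀ ha (by linarith : (uL x - uL y) * (π' E).toReal
            = (uL x - uL y) * (πL E).toReal)
          linarith
        haveI : IsProbabilityMeasure π' := hb.1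
        exact (ENNReal.toReal_eq_toReal_iff' (measure_ne_top π' E) (measure_ne_top πL E)).mp hreal
      have hπeq : π' = πL := Measure.ext hEeq
      refine ⟨hb, uL, ⟨hnorm.1, 1, fun z => ?_⟩, by rw [hπeq]; exact hL.2.2⟩
      rw [abs_le]
      constructor
      · have := hnorm.2.1.1 (Set.mem_range_self z)
        linarith
      · exact hnorm.2.2.1 (Set.mem_range_self z)
end

section
/- The map taking a pair of a belief and a normalized utility function to the SEU preference relation it induces is continuous: if a sequence of beliefs (π^n) converges uniformly to π ∈ Π and a sequence (u^n) in 𝒰̄ converges to u ∈ 𝒰̄, then the preference relations ≿(π^n, u^n) represented by (π^n, u^n) converge to ≿(π, u) in R̄. -/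
open MeasureTheory

lemma aux_tv_bound {Ω : Type*} [MeasurableSpace Ω] (μ ν : Measure Ω)
    [IsProbabilityMeasure μ] [IsProbabilityMeasure ν]
    (g : Ω → ℝ) (hg : Measurable g) (hg0 : ∀ ω, 0 ≤ g ω) (hg1 : ∀ ω, g ω ≤ 1)
    (δ : ℝ) (hδ : 0 ≤ δ)
    (hE : ∀ E : Set Ω, MeasurableSet E → |(μ E).toReal - (ν E).toReal| ≤ δ) :
    |∫ ω, g ω ∂μ - ∫ ω, g ω ∂ν| ≤ δ := by
  have hint : ∀ (κ : Measure Ω), IsProbabilityMeasure κ → Integrable g κ := by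
    intro κ hκ
    refine Integrable.mono' (integrable_const 1) hg.aestronglyMeasurable ?_
    exact Filter.Eventually.of_forall fun ω => by
      rw [Real.norm_eq_abs, abs_of_nonneg (hg0 ω)]; exact hg1 ω
  have hμint := hint μ inferInstance
  have hνint := hint ν inferInstance
  set F : ℝ → ℝ := fun t => (μ {a | t < g a}).toReal with hF
  set G : ℝ → ℝ := fun t => (ν {a | t < g a}).toReal with hG
  have hlayμ := hμint.integral_eq_integral_meas_lt (Filter.Eventually.of_forall hg0)
  have hlayν := hνint.integral_eq_integral_meas_lt (Filter.Eventually.of_forall hg0)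
  rw [hlayμ, hlayν]
  have hmeas : ∀ (κ : Measure Ω), Measurable fun t => (κ {a | t < g a}).toReal := by
    intro κ
    exact Measurable.ennreal_toReal
      (Antitone.measurable fun _ _ hst => measure_mono fun _ h => lt_of_le_of_lt hst h)
  have hzero : ∀ t : ℝ, 1 < t → ∀ (κ : Measure Ω), ({a | t < g a} : Set Ω) = ∅ := by
    intro t ht κ
    ext a; simp only [Set.mem_setOf_eq, Set.mem_empty_iff_false, iff_false, not_lt]
    exact (hg1 a).trans ht.le
  have hbound1 : ∀ (κ : Measure Ω) (hκ : IsProbabilityMeasure κ) (t : ℝ),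
      (κ {a | t < g a}).toReal ≤ 1 := by
    intro κ hκ t
    have := measure_mono (Set.subset_univ {a | t < g a}) (μ := κ)
    simpa using ENNReal.toReal_mono (by simp) this
  -- the indicator bound
  set ind : ℝ → ℝ := (Set.Ioc (0:ℝ) 1).indicator (fun _ => 1) with hind
  have hind_int : Integrable ind (volume.restrict (Set.Ioi (0:ℝ))) := by
    refine Integrable.restrict ?_
    rw [hind, integrable_indicator_iff measurableSet_Ioc]
    exact integrableOn_const (by simp) (by simp)
  have hFle : ∀ (κ : Measure Ω) (hκ : IsProbabilityMeasure κ), ∀ t ∈ Set.Ioi (0:ℝ),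
      ‖(κ {a | t < g a}).toReal‖ ≤ ind t := by
    intro κ hκ t ht
    rcases le_or_gt t 1 with h1 | h1
    · rw [hind, Set.indicator_of_mem (Set.mem_Ioc.mpr ⟨Set.mem_Ioi.mp ht, h1⟩), Real.norm_eq_abs,
        abs_of_nonneg ENNReal.toReal_nonneg]
      exact hbound1 κ hκ t
    · rw [hzero t h1 κ]
      simp [hind, Set.indicator_nonneg]
  have hFint : ∀ (κ : Measure Ω) (hκ : IsProbabilityMeasure κ),
      Integrable (fun t => (κ {a | t < g a}).toReal) (volume.restrict (Set.Ioi (0:ℝ))) := by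
    intro κ hκ
    refine Integrable.mono' hind_int (hmeas κ).aestronglyMeasurable ?_
    exact (ae_restrict_iff' measurableSet_Ioi).2
      (Filter.Eventually.of_forall fun t ht => hFle κ hκ t ht)
  simp only [Measure.real]
  rw [← integral_sub (hFint μ inferInstance) (hFint ν inferInstance)]
  have key : ‖∫ t in Set.Ioi (0:ℝ), (F t - G t)‖ ≤ ∫ t in Set.Ioi (0:ℝ), δ * ind t := by
    refine norm_integral_le_of_norm_le (hind_int.const_mul δ) ?_
    refine (ae_restrict_iff' measurableSet_Ioi).2 (Filter.Eventually.of_forall fun t ht => ?_)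
    rcases le_or_gt t 1 with h1 | h1
    · rw [hind, Set.indicator_of_mem (Set.mem_Ioc.mpr ⟨Set.mem_Ioi.mp ht, h1⟩), mul_one, Real.norm_eq_abs]
      have : {a | t < g a} = g ⁻¹' Set.Ioi t := rfl
      exact hE _ (hg measurableSet_Ioi)
    · have h0F : F t = 0 := by simp [hF, hzero t h1 μ]
      have h0G : G t = 0 := by simp [hG, hzero t h1 ν]
      have hnotmem : t ∉ Set.Ioc (0:ℝ) 1 := fun hm => absurd hm.2 (not_le.2 h1)
      rw [h0F, h0G, hind, Set.indicator_of_notMem hnotmem, mul_zero]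
      simp
  have hcalc : ∫ t in Set.Ioi (0:ℝ), δ * ind t = δ := by
    rw [integral_const_mul, hind, integral_indicator measurableSet_Ioc,
      Measure.restrict_restrict measurableSet_Ioc]
    have : Set.Ioc (0:ℝ) 1 ∩ Set.Ioi 0 = Set.Ioc 0 1 :=
      Set.inter_eq_left.2 fun x hx => hx.1
    rw [this]
    simp
  rw [hcalc] at key
  simpa [Real.norm_eq_abs] using key

theorem stmt10 {Ω O : Type*} [mΩ : MeasurableSpace Ω] [mO : MeasurableSpace O]
    (hO : 4 ≤ Cardinal.mk O)
    (πn : ℕ → Measure Ω) (un : ℕ → O → ℝ)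
    (π : Measure Ω) (u : O → ℝ)
    (hn : ∀ n, IsBelief (πn n) ∧ NormalizedUtilityBar (un n))
    (hπ : IsBelief π) (hu : NormalizedUtilityBar u)
    (rn : ℕ → Pref Ω O) (r : Pref Ω O)
    (hrn : ∀ n, Represents (πn n) (un n) (rn n))
    (hr : Represents π u r)
    (hπconv : ∀ ε : ℝ, 0 < ε → ∃ N : ℕ, ∀ n ≥ N, ∀ E : Set Ω, MeasurableSet E →
      |(πn n E).toReal - (π E).toReal| < ε)
    (huconv : u = 0 ∨
      ∀ ε : ℝ, 0 < ε → ∃ N : ℕ, ∀ n ≥ N, un n ≠ 0 ∧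
        ∀ x : O, |un n x - u x| < ε) :
    CompletelyIndifferent r ∨
      ∀ ε : ℝ, 0 < ε → ∃ N : ℕ, ∀ n ≥ N, ¬ CompletelyIndifferent (rn n) ∧
        ∀ f : Act Ω O, |ev (πn n) (un n) f - ev π u f| < ε := by
  rcases hu with hNu | h0
  case inr =>
    left
    intro f g
    rw [hr f g]
    subst h0
    simp [ev]
  rcases huconv with h0 | hconv
  · exfalso
    have h1 := hNu.2.2
    rw [h0] at h1
    have h2 : (1:ℝ) ≤ 0 := h1.2 (fun x hx => by
      rcases hx with ⟨y, hy⟩; rw [← hy]; rfl)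
    linarith
  right
  intro ε hε
  obtain ⟨N1, hN1⟩ := hconv (ε/4) (by linarith)
  obtain ⟨N2, hN2⟩ := hπconv (ε/4) (by linarith)
  refine ⟨max N1 N2, fun n hnN => ?_⟩
  have hn1 := hN1 n (le_trans (le_max_left _ _) hnN)
  have hn2 := hN2 n (le_trans (le_max_right _ _) hnN)
  haveI hprob_n : IsProbabilityMeasure (πn n) := (hn n).1.1
  haveI hprob : IsProbabilityMeasure π := hπ.1
  have hNun : NormalizedUtility (un n) := (hn n).2.resolve_right hn1.1
  have hun0 : ∀ x, 0 ≤ un n x := fun x => hNun.2.1.1 ⟨x, rfl⟩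
  have hun1 : ∀ x, un n x ≤ 1 := fun x => hNun.2.2.1 ⟨x, rfl⟩
  have hu0 : ∀ x, 0 ≤ u x := fun x => hNu.2.1.1 ⟨x, rfl⟩
  have hu1 : ∀ x, u x ≤ 1 := fun x => hNu.2.2.1 ⟨x, rfl⟩
  constructor
  · obtain ⟨x, hx⟩ : ∃ x, 2/3 < un n x := by
      by_contra h
      push_neg at h
      have := hNun.2.2.2 (fun v hv => by rcases hv with ⟨z, hz⟩; rw [← hz]; exact h z)
      linarith
    obtain ⟨y, hy⟩ : ∃ y, un n y < 1/3 := by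
      by_contra h
      push_neg at h
      have := hNun.2.1.2 (fun v hv => by rcases hv with ⟨z, hz⟩; rw [← hz]; exact h z)
      linarith
    intro hCI
    have h1 := hCI ⟨fun _ => y, measurable_const⟩ ⟨fun _ => x, measurable_const⟩
    rw [hrn n] at h1
    simp only [ev, integral_const, measure_univ, probReal_univ, one_smul,
      smul_eq_mul, one_mul] at h1
    linarith
  · intro f
    have hmf := f.2
    have hun_int : Integrable (fun ω => un n (f.1 ω)) (πn n) := by
      refine Integrable.mono' (integrable_const 1)
        ((hNun.1.comp hmf).aestronglyMeasurable) ?_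
      exact Filter.Eventually.of_forall fun ω => by
        rw [Real.norm_eq_abs, abs_of_nonneg (hun0 _)]; exact hun1 _
    have hu_int : Integrable (fun ω => u (f.1 ω)) (πn n) := by
      refine Integrable.mono' (integrable_const 1)
        ((hNu.1.comp hmf).aestronglyMeasurable) ?_
      exact Filter.Eventually.of_forall fun ω => by
        rw [Real.norm_eq_abs, abs_of_nonneg (hu0 _)]; exact hu1 _
    have t1 : |ev (πn n) (un n) f - ev (πn n) u f| ≤ ε/4 := by
      rw [ev, ev, ← integral_sub hun_int hu_int]
      have hb := norm_integral_le_of_norm_le_const (μ := πn n)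
        (f := fun ω => un n (f.1 ω) - u (f.1 ω)) (C := ε/4)
        (Filter.Eventually.of_forall fun ω => by
          rw [Real.norm_eq_abs]; exact le_of_lt (hn1.2 (f.1 ω)))
      simpa [Real.norm_eq_abs, measure_univ] using hb
    have t2 : |ev (πn n) u f - ev π u f| ≤ ε/4 := by
      refine aux_tv_bound (πn n) π (fun ω => u (f.1 ω)) (hNu.1.comp hmf)
        (fun ω => hu0 _) (fun ω => hu1 _) (ε/4) (by linarith) ?_
      intro E hEm
      exact le_of_lt (hn2 E hEm)
    have htri := abs_sub_le (ev (πn n) (un n) f) (ev (πn n) u f) (ev π u f)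
    linarith
end

section
/- Let p ∈ R̄^I be a profile and i ∈ I such that the normalized utility function u_j is simple (has finite range) for every agent j ∈ I ∖ {i}. Then for every act f ∈ 𝒜 there exists a simple act g ∈ 𝒜 (an act with finite range) such that f ∼_j g for all j ∈ I; equivalently, ∫(u_j∘f)dπ_j = ∫(u_j∘g)dπ_j for every j ∈ I. -/
open MeasureTheory

section Aux
open Set
variable {Ω : Type*} [mΩ : MeasurableSpace Ω] {μ : Measure Ω}

lemma halve [IsFiniteMeasure μ] (hna : NonatomicOn μ mΩ) {E : Set Ω}
    (hE : MeasurableSet E) (hpos : 0 < μ E) :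
    ∃ F, MeasurableSet F ∧ F ⊆ E ∧ 0 < μ F ∧ μ F ≤ μ E / 2 := by
  obtain ⟨F, hF, hFE, hFpos, hFlt⟩ := hna E hE hpos
  rcases le_or_gt (μ F) (μ E / 2) with h | h
  · exact ⟨F, hF, hFE, hFpos, h⟩
  · refine ⟨E \ F, hE.diff hF, diff_subset, ?_, ?_⟩
    · rw [measure_diff hFE hF.nullMeasurableSet (measure_ne_top μ F)]
      exact tsub_pos_of_lt hFlt
    · rw [measure_diff hFE hF.nullMeasurableSet (measure_ne_top μ F)]
      rw [tsub_le_iff_right]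
      calc μ E = μ E / 2 + μ E / 2 := (ENNReal.add_halves _).symm
      _ ≤ μ E / 2 + μ F := by gcongr

lemma small [IsFiniteMeasure μ] (hna : NonatomicOn μ mΩ) {E : Set Ω}
    (hE : MeasurableSet E) (hpos : 0 < μ E) {ε : ENNReal} (hε : 0 < ε) :
    ∃ F, MeasurableSet F ∧ F ⊆ E ∧ 0 < μ F ∧ μ F ≤ ε := by
  have key : ∀ n : ℕ, ∃ F, MeasurableSet F ∧ F ⊆ E ∧ 0 < μ F ∧ μ F ≤ μ E / 2 ^ n := by
    intro n
    induction n with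
    | zero => exact ⟨E, hE, subset_rfl, hpos, by simp⟩
    | succ n ih =>
      obtain ⟨F, hF, hFE, hFpos, hFle⟩ := ih
      obtain ⟨G, hG, hGF, hGpos, hGle⟩ := halve hna hF hFpos
      refine ⟨G, hG, hGF.trans hFE, hGpos, ?_⟩
      calc μ G ≤ μ F / 2 := hGle
      _ ≤ μ E / 2 ^ n / 2 := by gcongr
      _ = μ E / 2 ^ (n + 1) := by
          have h : ((2:ENNReal) ^ n * 2)⁻¹ = ((2:ENNReal)^n)⁻¹ * 2⁻¹ :=
            ENNReal.mul_inv (Or.inl (by positivity)) (Or.inl (by simp))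
          simp only [div_eq_mul_inv, pow_succ, h, mul_assoc]
  -- choose n with μ E / 2 ^ n ≤ ε
  obtain ⟨n, hn⟩ : ∃ n : ℕ, μ E / 2 ^ n ≤ ε := by
    obtain ⟨n, hn⟩ := ENNReal.exists_nat_gt (r := μ E / ε) (by
      exact (ENNReal.div_lt_top (measure_ne_top μ E) hε.ne').ne)
    refine ⟨n, ?_⟩
    have h2 : μ E / ε < 2 ^ n := lt_of_lt_of_le hn (by
      exact_mod_cast Nat.cast_le.mpr (Nat.le_of_lt ((Nat.lt_two_pow_self (n := n)))))
    rcases eq_or_ne ε ⊤ with rfl | hεt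
    · exact le_top
    · rw [ENNReal.div_le_iff_le_mul (Or.inl (by positivity)) (Or.inl (by simp))]
      rw [ENNReal.div_lt_iff (Or.inl hε.ne') (Or.inl hεt)] at h2
      exact le_of_lt (by calc μ E < 2 ^ n * ε := h2
                           _ = ε * 2 ^ n := mul_comm _ _)
  obtain ⟨F, h1, h2, h3, h4⟩ := key n
  exact ⟨F, h1, h2, h3, h4.trans hn⟩

lemma sierpinski [IsFiniteMeasure μ] (hna : NonatomicOn μ mΩ) {E : Set Ω}
    (hE : MeasurableSet E) {t : ENNReal} (ht : t ≤ μ E) :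
    ∃ F, MeasurableSet F ∧ F ⊆ E ∧ μ F = t := by
  classical
  have htt : t ≠ ⊤ := (lt_of_le_of_lt ht (measure_lt_top μ E)).ne
  -- step function
  have step : ∀ F : Set Ω, MeasurableSet F → F ⊆ E → μ F ≤ t →
      ∃ F', MeasurableSet F' ∧ F' ⊆ E ∧ μ F' ≤ t ∧ F ⊆ F' ∧
        ∀ G, MeasurableSet G → G ⊆ E \ F → μ F + μ G ≤ t → μ F + μ G / 2 ≤ μ F' := by
    intro F hF hFE hFt
    set s : ENNReal := ⨆ (G : Set Ω) (_ : MeasurableSet G ∧ G ⊆ E \ F ∧ μ F + μ G ≤ t), μ G with hs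
    have hsle : ∀ G, MeasurableSet G → G ⊆ E \ F → μ F + μ G ≤ t → μ G ≤ s := by
      intro G h1 h2 h3
      exact le_iSup₂ (f := fun (G : Set Ω) (_ : MeasurableSet G ∧ G ⊆ E \ F ∧ μ F + μ G ≤ t) => μ G) G ⟨h1, h2, h3⟩
    have hstop : s ≠ ⊤ := by
      refine (lt_of_le_of_lt ?_ (measure_lt_top μ univ)).ne
      exact iSup₂_le fun G _ => measure_mono (subset_univ G)
    obtain ⟨G₀, hG₀m, hG₀s, hG₀t, hG₀big⟩ :
        ∃ G₀, MeasurableSet G₀ ∧ G₀ ⊆ E \ F ∧ μ F + μ G₀ ≤ t ∧ s ≤ 2 * μ G₀ := by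
      rcases eq_or_ne s 0 with hs0 | hs0
      · exact ⟨∅, MeasurableSet.empty, empty_subset _, by simpa using hFt, by simp [hs0]⟩
      · have hhalf : s / 2 < s := ENNReal.half_lt_self hs0 hstop
        rw [hs] at hhalf
        obtain ⟨G₀, hG₀⟩ := lt_iSup_iff.mp hhalf
        obtain ⟨⟨h1, h2, h3⟩, h4⟩ := lt_iSup_iff.mp hG₀
        refine ⟨G₀, h1, h2, h3, ?_⟩
        rw [← hs] at h4
        calc s = s / 2 * 2 := (ENNReal.div_mul_cancel (by simp) (by simp)).symm
        _ ≤ μ G₀ * 2 := mul_le_mul_left h4.le 2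
        _ = 2 * μ G₀ := mul_comm _ _
    refine ⟨F ∪ G₀, hF.union hG₀m, union_subset hFE (hG₀s.trans diff_subset), ?_, subset_union_left, ?_⟩
    · exact le_trans (measure_union_le _ _) hG₀t
    · intro G h1 h2 h3
      have hdisj : Disjoint F G₀ := disjoint_of_subset_right hG₀s disjoint_sdiff_self_right
      have hGs : μ G ≤ s := hsle G h1 h2 h3
      have hG2 : μ G / 2 ≤ μ G₀ := by
        rw [ENNReal.div_le_iff_le_mul (Or.inl (by simp)) (Or.inl (by simp))]
        calc μ G ≤ s := hGs
        _ ≤ 2 * μ G₀ := hG₀big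
        _ = μ G₀ * 2 := mul_comm _ _
      rw [measure_union hdisj hG₀m]
      exact add_le_add_right hG2 (μ F)
  choose! stepF h1 h2 h3 h4 h5 using step
  set seq : ℕ → Set Ω := fun n => Nat.rec ∅ (fun _ F => stepF F) n with hseq
  have hseq0 : seq 0 = ∅ := rfl
  have hseqS : ∀ n, seq (n + 1) = stepF (seq n) := fun n => rfl
  have hinv : ∀ n, MeasurableSet (seq n) ∧ seq n ⊆ E ∧ μ (seq n) ≤ t := by
    intro n
    induction n with
    | zero => exact ⟨MeasurableSet.empty, empty_subset _, by rw [hseq0]; simp⟩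
    | succ n ih =>
      rw [hseqS]
      exact ⟨h1 _ ih.1 ih.2.1 ih.2.2, h2 _ ih.1 ih.2.1 ih.2.2, h3 _ ih.1 ih.2.1 ih.2.2⟩
  have hmono : Monotone seq := by
    apply monotone_nat_of_le_succ
    intro n
    rw [hseqS]
    exact h4 _ (hinv n).1 (hinv n).2.1 (hinv n).2.2
  set Fi : Set Ω := ⋃ n, seq n with hFi
  have hFim : MeasurableSet Fi := MeasurableSet.iUnion fun n => (hinv n).1
  have hFiE : Fi ⊆ E := iUnion_subset fun n => (hinv n).2.1
  have hFimeas : μ Fi = ⨆ n, μ (seq n) := Directed.measure_iUnion hmono.directed_le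
  have hFit : μ Fi ≤ t := by
    rw [hFimeas]; exact iSup_le fun n => (hinv n).2.2
  refine ⟨Fi, hFim, hFiE, ?_⟩
  by_contra hne
  have hlt : μ Fi < t := lt_of_le_of_ne hFit hne
  have hdiffpos : 0 < μ (E \ Fi) := by
    by_contra hz
    push_neg at hz
    have hz0 : μ (E \ Fi) = 0 := le_antisymm hz zero_le
    have : μ E ≤ μ Fi := by
      calc μ E ≤ μ (E ∩ Fi) + μ (E \ Fi) := measure_le_inter_add_diff μ E Fi
      _ = μ (E ∩ Fi) := by rw [hz0, add_zero]
      _ ≤ μ Fi := measure_mono inter_subset_right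
    exact absurd (lt_of_lt_of_le hlt (ht.trans this)) (lt_irrefl _)
  obtain ⟨G, hGm, hGsub, hGpos, hGle⟩ := small hna (hE.diff hFim) hdiffpos
      (ε := t - μ Fi) (tsub_pos_of_lt hlt)
  -- G qualifies at every stage
  have hqual : ∀ n, μ (seq n) + μ G / 2 ≤ μ (seq (n + 1)) := by
    intro n
    rw [hseqS]
    refine h5 _ (hinv n).1 (hinv n).2.1 (hinv n).2.2 G hGm ?_ ?_
    · exact hGsub.trans (diff_subset_diff_right (subset_iUnion seq n))
    · calc μ (seq n) + μ G ≤ μ Fi + (t - μ Fi) :=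
            add_le_add (measure_mono (subset_iUnion seq n)) hGle
      _ = t := add_tsub_cancel_of_le hFit
  have hc : 0 < μ G / 2 := ENNReal.div_pos hGpos.ne' (by simp)
  have hgrow : ∀ n : ℕ, (n : ENNReal) * (μ G / 2) ≤ μ (seq n) := by
    intro n
    induction n with
    | zero => simp
    | succ n ih =>
      push_cast
      calc ((n : ENNReal) + 1) * (μ G / 2) = (n : ENNReal) * (μ G / 2) + μ G / 2 := by ring
      _ ≤ μ (seq n) + μ G / 2 := add_le_add_left ih _
      _ ≤ μ (seq (n + 1)) := hqual n
  have hbound : ∀ n : ℕ, (n : ENNReal) * (μ G / 2) ≤ t :=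
    fun n => (hgrow n).trans (hinv n).2.2
  have hctop : μ G / 2 ≠ ⊤ := (ENNReal.div_lt_top (measure_ne_top μ G) (by simp)).ne
  obtain ⟨n, hn⟩ := ENNReal.exists_nat_gt (r := t / (μ G / 2))
      (ENNReal.div_lt_top htt hc.ne').ne
  rw [ENNReal.div_lt_iff (Or.inl hc.ne') (Or.inl hctop)] at hn
  exact absurd (lt_of_lt_of_le hn (hbound n)) (lt_irrefl _)

lemma cell_exists {O : Type*} [mO : MeasurableSpace O]
    [IsProbabilityMeasure μ] (hna : NonatomicOn μ mΩ)
    {u : O → ℝ} (hum : Measurable u) (hub : ∀ x, |u x| ≤ 1)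
    {f : Ω → O} (hf : Measurable f) {E : Set Ω} (hE : MeasurableSet E)
    (hne : E.Nonempty) :
    ∃ (o₁ o₂ : O) (F : Set Ω), o₁ ∈ f '' E ∧ o₂ ∈ f '' E ∧ MeasurableSet F ∧ F ⊆ E ∧
      u o₁ * (μ F).toReal + u o₂ * (μ (E \ F)).toReal = ∫ ω in E, u (f ω) ∂μ := by
  obtain ⟨ω₀, hω₀⟩ := hne
  have hint : Integrable (fun ω => u (f ω)) μ :=
    Integrable.mono' (integrable_const 1) ((hum.comp hf)).aestronglyMeasurable
      (Filter.Eventually.of_forall fun ω => by simpa [Real.norm_eq_abs] using hub (f ω))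
  by_cases hE0 : μ E = 0
  · refine ⟨f ω₀, f ω₀, ∅, ⟨ω₀, hω₀, rfl⟩, ⟨ω₀, hω₀, rfl⟩, MeasurableSet.empty,
      empty_subset _, ?_⟩
    rw [setIntegral_measure_zero _ hE0]
    simp [hE0, measure_empty]
  -- positive measure case
  set ν : Measure Ω := μ.restrict E with hν
  have hν0 : ν ≠ 0 := by
    intro h
    apply hE0
    rw [← Measure.restrict_apply_univ, ← hν, h]
    rfl
  have hintν : Integrable (fun ω => u (f ω)) ν := hint.restrict
  have hNc : ν Eᶜ = 0 := by
    rw [hν, Measure.restrict_apply hE.compl, compl_inter_self, measure_empty]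
  obtain ⟨ω₁, hω₁, hle₁⟩ := exists_notMem_null_le_average hν0 hintν hNc
  obtain ⟨ω₂, hω₂, hle₂⟩ := exists_notMem_null_average_le hν0 hintν hNc
  rw [notMem_compl_iff] at hω₁ hω₂
  set A : ℝ := ⨍ a, u (f a) ∂ν with hA
  set m : ℝ := (μ E).toReal with hm
  have hm0 : 0 < m := ENNReal.toReal_pos hE0 (measure_ne_top μ E)
  have hIA : ∫ ω in E, u (f ω) ∂μ = A * m := by
    rw [hA, average_eq, smul_eq_mul]
    have huniv : (ν univ).toReal = m := by rw [hν, Measure.restrict_apply_univ]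
    rw [measureReal_def, huniv]
    field_simp
    rfl
  set α : ℝ := u (f ω₁) with hα
  set β : ℝ := u (f ω₂) with hβ
  set r : ℝ := if β - α = 0 then (0:ℝ) else (β - A) / (β - α) with hr
  have hαβ : α ≤ β := le_trans hle₁ hle₂
  have hβα : β - α ≠ 0 → 0 < β - α := by
    intro h
    rcases lt_or_eq_of_le hαβ with hlt | heq
    · linarith
    · exact absurd (by linarith) h
  have hr0 : 0 ≤ r := by
    rw [hr]; split_ifs with h
    · exact le_rfl
    · exact div_nonneg (by linarith) (hβα h).le
  have hr1 : r ≤ 1 := by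
    rw [hr]; split_ifs with h
    · exact zero_le_one
    · rw [div_le_one (hβα h)]; linarith
  set t : ENNReal := ENNReal.ofReal (r * m) with htdef
  have htle : t ≤ μ E := by
    rw [htdef]
    calc ENNReal.ofReal (r * m) ≤ ENNReal.ofReal m := by
          apply ENNReal.ofReal_le_ofReal; nlinarith
    _ = μ E := by rw [hm, ENNReal.ofReal_toReal (measure_ne_top μ E)]
  obtain ⟨F, hFm, hFE, hFμ⟩ := sierpinski hna hE htle
  have hFtr : (μ F).toReal = r * m := by
    rw [hFμ, htdef, ENNReal.toReal_ofReal (by nlinarith)]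
  have hDtr : (μ (E \ F)).toReal = m - r * m := by
    rw [measure_diff hFE hFm.nullMeasurableSet (measure_ne_top μ F),
      ENNReal.toReal_sub_of_le (hFμ ▸ htle) (measure_ne_top μ E), hFtr, ← hm]
  refine ⟨f ω₁, f ω₂, F, ⟨ω₁, hω₁, rfl⟩, ⟨ω₂, hω₂, rfl⟩, hFm, hFE, ?_⟩
  rw [hFtr, hDtr, hIA, ← hα, ← hβ]
  by_cases h : β - α = 0
  · have hAβ : A = β := by
      have : α = β := by linarith
      linarith [hle₁, hle₂]
    rw [hr] at *
    rw [if_pos h] at *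
    have : α = β := by linarith
    rw [this, hAβ]; ring
  · have hrEq : r * (β - α) = β - A := by
      rw [hr, if_neg h, div_mul_cancel₀]
      exact h
    nlinarith [hrEq]

end Aux

theorem stmt11 {Ω O I : Type*} [mΩ : MeasurableSpace Ω] [mO : MeasurableSpace O]
    [Fintype I] (hO : 4 ≤ Cardinal.mk O) (hI : 3 ≤ Fintype.card I)
    (p : I → Pref Ω O) (hp : IsProfile p)
    (πa : I → Measure Ω) (ua : I → O → ℝ)
    (hrep : ∀ j, NormRep (πa j) (ua j) (p j))
    (i : I) (hsimple : ∀ j, j ≠ i → (Set.range (ua j)).Finite)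
    (f : Act Ω O) :
    ∃ g : Act Ω O, (Set.range g.1).Finite ∧
      (∀ j, p j f g ∧ p j g f) ∧
      ∀ j, ev (πa j) (ua j) f = ev (πa j) (ua j) g := by
  classical
  have hprob : ∀ j, IsProbabilityMeasure (πa j) := fun j => (hrep j).1.1
  have hna : ∀ j, NonatomicOn (πa j) mΩ := fun j => (hrep j).1.2
  have hum : ∀ j, Measurable (ua j) := by
    intro j
    rcases (hrep j).2.1 with h | h
    · exact h.1
    · exact h ▸ measurable_const
  have hub : ∀ j x, |ua j x| ≤ 1 := by
    intro j x
    rcases (hrep j).2.1 with h | h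
    · have h0 : 0 ≤ ua j x := h.2.1.1 (Set.mem_range_self x)
      have h1 : ua j x ≤ 1 := h.2.2.1 (Set.mem_range_self x)
      rw [abs_le]; exact ⟨by linarith, h1⟩
    · simp [h]
  have hint : ∀ j (w : Ω → O), Measurable w →
      Integrable (fun ω => ua j (w ω)) (πa j) := by
    intro j w hw
    haveI := hprob j
    exact Integrable.mono' (integrable_const 1) ((hum j).comp hw).aestronglyMeasurable
      (Filter.Eventually.of_forall fun ω => by simpa [Real.norm_eq_abs] using hub j (w ω))
  rcases isEmpty_or_nonempty Ω with hΩ | hΩ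
  · refine ⟨f, ?_, fun j => ?_, fun j => rfl⟩
    · rw [Set.range_eq_empty]; exact Set.finite_empty
    · rw [(hrep j).2.2 f f]
      exact ⟨le_rfl, le_rfl⟩
  haveI : Nonempty O := ⟨f.1 (Classical.arbitrary Ω)⟩
  set v : Ω → I → ℝ := fun ω j => if j = i then 0 else ua j (f.1 ω) with hv
  have hvfin : (Set.range v).Finite := by
    have hpi : (Set.pi Set.univ fun j =>
        if j = i then ({0} : Set ℝ) else Set.range (ua j)).Finite := by
      apply Set.Finite.pi
      intro j
      split_ifs with hj
      · exact Set.finite_singleton 0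
      · exact hsimple j hj
    apply hpi.subset
    rintro - ⟨ω, rfl⟩
    intro j _
    by_cases hj : j = i <;> simp [hv, hj]
  have hcellmeas : ∀ c : I → ℝ, MeasurableSet (v ⁻¹' {c}) := by
    intro c
    have hc : v ⁻¹' {c} = ⋂ j, {ω | v ω j = c j} := by
      ext ω
      simp [funext_iff]
    rw [hc]
    refine MeasurableSet.iInter fun j => ?_
    by_cases hj : j = i
    · have : {ω | v ω j = c j} = {ω : Ω | (0:ℝ) = c j} := by
        ext ω; simp [hv, hj]
      rw [this]
      exact MeasurableSet.const _
    · have : {ω | v ω j = c j} = (fun ω => ua j (f.1 ω)) ⁻¹' {c j} := by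
        ext ω; simp [hv, hj]
      rw [this]
      exact ((hum j).comp f.2) (measurableSet_singleton _)
  have hcell : ∀ c : I → ℝ, (v ⁻¹' {c}).Nonempty →
      ∃ (o₁ o₂ : O) (F : Set Ω), o₁ ∈ f.1 '' (v ⁻¹' {c}) ∧ o₂ ∈ f.1 '' (v ⁻¹' {c}) ∧
        MeasurableSet F ∧ F ⊆ v ⁻¹' {c} ∧
        ua i o₁ * ((πa i) F).toReal + ua i o₂ * ((πa i) (v ⁻¹' {c} \ F)).toReal
          = ∫ ω in v ⁻¹' {c}, ua i (f.1 ω) ∂(πa i) := by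
    intro c hne
    haveI := hprob i
    exact cell_exists (hna i) (hum i) (hub i) f.2 (hcellmeas c) hne
  choose! o1 o2 Ff hmem1 hmem2 hFm hFs hFeq using hcell
  set g : Ω → O := fun ω => if ω ∈ Ff (v ω) then o1 (v ω) else o2 (v ω) with hg
  have hgmem : ∀ ω, g ω ∈ f.1 '' (v ⁻¹' {v ω}) := by
    intro ω
    have hne : (v ⁻¹' {v ω}).Nonempty := ⟨ω, rfl⟩
    rw [hg]
    dsimp only
    split_ifs
    exacts [hmem1 (v ω) hne, hmem2 (v ω) hne]
  have hgj : ∀ j, j ≠ i → ∀ ω, ua j (g ω) = ua j (f.1 ω) := by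
    intro j hj ω
    obtain ⟨ω', hω', hfω'⟩ := hgmem ω
    have hvv : v ω' = v ω := hω'
    have h1 : ua j (f.1 ω') = ua j (f.1 ω) := by
      have h2 := congrFun hvv j
      simpa [hv, hj] using h2
    rw [← hfω', h1]
  have hgm : Measurable g := by
    intro B _
    have hpre : g ⁻¹' B = ⋃ c ∈ Set.range v,
        ((v ⁻¹' {c} ∩ Ff c) ∩ {ω : Ω | o1 c ∈ B}) ∪
          ((v ⁻¹' {c} \ Ff c) ∩ {ω : Ω | o2 c ∈ B}) := by
      ext ω
      simp only [Set.mem_preimage, Set.mem_iUnion, Set.mem_union, Set.mem_inter_iff,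
        Set.mem_diff, Set.mem_setOf_eq, Set.mem_singleton_iff, exists_prop]
      constructor
      · intro hωB
        refine ⟨v ω, ⟨ω, rfl⟩, ?_⟩
        rw [hg] at hωB
        dsimp only at hωB
        by_cases hF : ω ∈ Ff (v ω)
        · left; exact ⟨⟨rfl, hF⟩, by rwa [if_pos hF] at hωB⟩
        · right; exact ⟨⟨rfl, hF⟩, by rwa [if_neg hF] at hωB⟩
      · rintro ⟨c, _, ⟨⟨hvc, hF⟩, hB1⟩ | ⟨⟨hvc, hF⟩, hB2⟩⟩
        · rw [hg]; dsimp only; rw [hvc, if_pos hF]; exact hB1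
        · rw [hg]; dsimp only; rw [hvc, if_neg hF]; exact hB2
    rw [hpre]
    refine MeasurableSet.biUnion hvfin.countable fun c hc => ?_
    have hne : (v ⁻¹' {c}).Nonempty := by
      obtain ⟨ω, rfl⟩ := hc
      exact ⟨ω, rfl⟩
    exact (((hcellmeas c).inter (hFm c hne)).inter (MeasurableSet.const _)).union
      ((((hcellmeas c).diff (hFm c hne))).inter (MeasurableSet.const _))
  have hgfin : (Set.range g).Finite := by
    apply Set.Finite.subset (hvfin.biUnion fun c _ =>
      (Set.finite_singleton (o2 c)).insert (o1 c))
    rintro - ⟨ω, rfl⟩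
    refine Set.mem_biUnion ⟨ω, rfl⟩ ?_
    rw [hg]
    dsimp only
    split_ifs
    · exact Set.mem_insert _ _
    · exact Set.mem_insert_of_mem _ rfl
  have hev : ∀ j, ∫ ω, ua j (f.1 ω) ∂(πa j) = ∫ ω, ua j (g ω) ∂(πa j) := by
    intro j
    by_cases hj : j = i
    · subst hj
      haveI := hprob j
      set R : Finset (I → ℝ) := hvfin.toFinset with hR
      have hcover : ⋃ c ∈ R, v ⁻¹' {c} = Set.univ := by
        ext ω
        simp only [Set.mem_iUnion, Set.mem_univ, iff_true, Set.mem_preimage,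
          Set.mem_singleton_iff, exists_prop]
        exact ⟨v ω, hvfin.mem_toFinset.mpr ⟨ω, rfl⟩, rfl⟩
      have hdisj : Set.Pairwise (R : Set (I → ℝ)) (Function.onFun Disjoint fun c => v ⁻¹' {c}) := by
        intro c₁ _ c₂ _ hne12
        rw [Function.onFun, Set.disjoint_left]
        rintro ω h1 h2
        exact hne12 (h1.symm.trans h2)
      have key : ∀ h : Ω → ℝ, Integrable h (πa j) →
          ∫ ω, h ω ∂(πa j) = ∑ c ∈ R, ∫ ω in v ⁻¹' {c}, h ω ∂(πa j) := by
        intro h hh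
        rw [← setIntegral_univ, ← hcover,
          integral_biUnion_finset R (fun c _ => hcellmeas c) hdisj
            (fun c _ => hh.integrableOn)]
      rw [key _ (hint j f.1 f.2), key _ (hint j g hgm)]
      refine Finset.sum_congr rfl fun c hc => ?_
      have hne : (v ⁻¹' {c}).Nonempty := by
        obtain ⟨ω, rfl⟩ := hvfin.mem_toFinset.mp hc
        exact ⟨ω, rfl⟩
      have hEq := hFeq c hne
      have hval1 : Set.EqOn (fun ω => ua j (g ω)) (fun _ => ua j (o1 c)) (Ff c) := by
        intro ω hω
        have hωc : v ω = c := hFs c hne hω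
        have : g ω = o1 c := by
          rw [hg]; dsimp only; rw [hωc, if_pos hω]
        simp only [this]
      have hval2 : Set.EqOn (fun ω => ua j (g ω)) (fun _ => ua j (o2 c))
          (v ⁻¹' {c} \ Ff c) := by
        intro ω hω
        have hωc : v ω = c := hω.1
        have : g ω = o2 c := by
          rw [hg]; dsimp only; rw [hωc, if_neg hω.2]
        simp only [this]
      have hsplit : ∫ ω in v ⁻¹' {c}, ua j (g ω) ∂(πa j)
          = ∫ ω in Ff c, ua j (g ω) ∂(πa j)
            + ∫ ω in v ⁻¹' {c} \ Ff c, ua j (g ω) ∂(πa j) := by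
        rw [← integral_inter_add_diff (hFm c hne) ((hint j g hgm).integrableOn),
          Set.inter_eq_right.mpr (hFs c hne)]
      rw [hsplit, setIntegral_congr_fun (hFm c hne) hval1,
        setIntegral_congr_fun ((hcellmeas c).diff (hFm c hne)) hval2,
        setIntegral_const, setIntegral_const, smul_eq_mul, smul_eq_mul]
      rw [← hEq]
      simp only [measureReal_def]
      ring
    · exact integral_congr_ae (Filter.Eventually.of_forall fun ω => (hgj j hj ω).symm)
  refine ⟨⟨g, hgm⟩, hgfin, fun j => ?_, fun j => hev j⟩
  rw [(hrep j).2.2 f ⟨g, hgm⟩, (hrep j).2.2 ⟨g, hgm⟩ f]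
  exact ⟨le_of_eq (hev j).symm, le_of_eq (hev j)⟩
end

section
/- Let π and π' be non-atomic countably additive probability measures on a measurable space (Ω, ℰ). Then there is a sub-sigma-algebra ℰ' ⊆ ℰ such that π(E) = π'(E) for all E ∈ ℰ', and the restriction of π to ℰ' is non-atomic on the measurable space (Ω, ℰ'). -/
open MeasureTheory

open Set
open scoped ENNReal

section Aux12

variable {Ω : Type*} [m : MeasurableSpace Ω]

lemma na_half {μ : Measure Ω} [IsFiniteMeasure μ] (hμ : NonatomicOn μ m)
    {A : Set Ω} (hA : MeasurableSet A) (h0 : 0 < μ A) :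
    ∃ F, MeasurableSet F ∧ F ⊆ A ∧ 0 < μ F ∧ μ F ≤ μ A / 2 := by
  obtain ⟨F, hF, hFA, h1, h2⟩ := hμ A hA h0
  by_cases hc : μ F ≤ μ A / 2
  · exact ⟨F, hF, hFA, h1, hc⟩
  · push_neg at hc
    refine ⟨A \ F, hA.diff hF, diff_subset, ?_, ?_⟩
    · rw [measure_diff hFA hF.nullMeasurableSet (measure_ne_top μ F)]
      exact tsub_pos_of_lt h2
    · rw [measure_diff hFA hF.nullMeasurableSet (measure_ne_top μ F)]
      rw [tsub_le_iff_right]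
      calc μ A = μ A / 2 + μ A / 2 := (ENNReal.add_halves _).symm
      _ ≤ μ A / 2 + μ F := by gcongr

lemma na_small {μ : Measure Ω} [IsFiniteMeasure μ] (hμ : NonatomicOn μ m)
    {A : Set Ω} (hA : MeasurableSet A) (h0 : 0 < μ A) {ε : ℝ≥0∞} (hε : 0 < ε) :
    ∃ F, MeasurableSet F ∧ F ⊆ A ∧ 0 < μ F ∧ μ F ≤ ε := by
  have key : ∀ n : ℕ, ∃ F, MeasurableSet F ∧ F ⊆ A ∧ 0 < μ F ∧ μ F ≤ μ A / 2 ^ n := by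
    intro n
    induction n with
    | zero => exact ⟨A, hA, subset_rfl, h0, by simp⟩
    | succ n ih =>
      obtain ⟨F, hF, hFA, h1, h2⟩ := ih
      obtain ⟨G, hG, hGF, hg1, hg2⟩ := na_half hμ hF h1
      refine ⟨G, hG, hGF.trans hFA, hg1, hg2.trans ?_⟩
      have : μ A / 2 ^ (n+1) = (μ A / 2 ^ n) / 2 := by
        rw [pow_succ, div_eq_mul_inv, div_eq_mul_inv, div_eq_mul_inv, mul_assoc,
          ENNReal.mul_inv (by simp) (by simp)]
      rw [this]
      gcongr
  obtain ⟨n, hn⟩ : ∃ n : ℕ, μ A / 2 ^ n ≤ ε := by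
    have hne : ε / μ A ≠ 0 := (ENNReal.div_pos hε.ne' (measure_ne_top μ A)).ne'
    rcases ENNReal.exists_inv_two_pow_lt hne with ⟨n, hn⟩
    · refine ⟨n, ?_⟩
      rw [ENNReal.div_le_iff_le_mul (Or.inl (by positivity)) (Or.inr hε.ne')]
      have := hn.le
      rw [ENNReal.le_div_iff_mul_le (Or.inl h0.ne') (Or.inl (measure_ne_top μ A))] at this
      calc μ A = 2 ^ n * (2⁻¹ ^ n * μ A) := by
            rw [← mul_assoc, ← mul_pow, ENNReal.mul_inv_cancel two_ne_zero ENNReal.ofNat_ne_top,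
              one_pow, one_mul]
      _ ≤ 2 ^ n * ε := by gcongr
      _ = ε * 2 ^ n := mul_comm _ _
  obtain ⟨F, hF, hFA, h1, h2⟩ := key n
  exact ⟨F, hF, hFA, h1, h2.trans hn⟩

lemma na_exact {μ : Measure Ω} [IsFiniteMeasure μ] (hμ : NonatomicOn μ m)
    {A : Set Ω} (hA : MeasurableSet A) {t : ℝ≥0∞} (ht : t ≤ μ A) :
    ∃ F, MeasurableSet F ∧ F ⊆ A ∧ μ F = t := by
  classical
  have htop : t ≠ ∞ := (ht.trans_lt (measure_lt_top μ A)).ne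
  set P : Set Ω → Set Ω → Prop :=
    fun G D => MeasurableSet D ∧ D ⊆ A \ G ∧ μ G + μ D ≤ t with hP
  set δ : Set Ω → ℝ≥0∞ := fun G => ⨆ (D : Set Ω) (_ : P G D), μ D with hδ
  have hδ_le : ∀ G, δ G ≤ t := by
    intro G
    refine iSup_le fun D => iSup_le fun hD => le_trans ?_ hD.2.2
    exact le_add_self
  have step : ∀ G : Set Ω, MeasurableSet G → G ⊆ A → μ G ≤ t →
      ∃ G', MeasurableSet G' ∧ G' ⊆ A ∧ μ G' ≤ t ∧ G ⊆ G' ∧ μ G + δ G / 2 ≤ μ G' := by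
    intro G hG hGA hGt
    rcases eq_or_ne (δ G) 0 with h0 | h0
    · exact ⟨G, hG, hGA, hGt, subset_rfl, by simp [h0]⟩
    · have hlt : δ G / 2 < δ G :=
        ENNReal.half_lt_self h0 (ne_top_of_le_ne_top htop (hδ_le G))
      obtain ⟨D, hD, hD2⟩ : ∃ D, P G D ∧ δ G / 2 < μ D := by
        rw [hδ] at hlt
        obtain ⟨D, hD⟩ := lt_iSup_iff.mp hlt
        obtain ⟨h1, h2⟩ := lt_iSup_iff.mp hD
        exact ⟨D, h1, h2⟩
      obtain ⟨hDm, hDsub, hDt⟩ := hD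
      have hdisj : Disjoint G D := ((subset_diff.mp hDsub).2).symm
      refine ⟨G ∪ D, hG.union hDm, union_subset hGA ((subset_diff.mp hDsub).1), ?_, subset_union_left, ?_⟩
      · rw [measure_union hdisj hDm]; exact hDt
      · rw [measure_union hdisj hDm]; exact add_le_add le_rfl hD2.le
  choose stepF h1 h2 h3 h4 h5 using step
  let Gs : ℕ → {G : Set Ω // MeasurableSet G ∧ G ⊆ A ∧ μ G ≤ t} :=
    fun n => Nat.rec ⟨∅, MeasurableSet.empty, empty_subset A, by simp⟩
      (fun _ p => ⟨stepF p.1 p.2.1 p.2.2.1 p.2.2.2,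
        h1 p.1 p.2.1 p.2.2.1 p.2.2.2, h2 p.1 p.2.1 p.2.2.1 p.2.2.2, h3 p.1 p.2.1 p.2.2.1 p.2.2.2⟩) n
  have hGmono : ∀ n, (Gs n).1 ⊆ (Gs (n+1)).1 := by
    intro n
    exact h4 (Gs n).1 (Gs n).2.1 (Gs n).2.2.1 (Gs n).2.2.2
  have hGgrow : ∀ n, μ (Gs n).1 + δ (Gs n).1 / 2 ≤ μ (Gs (n+1)).1 := by
    intro n
    exact h5 (Gs n).1 (Gs n).2.1 (Gs n).2.2.1 (Gs n).2.2.2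
  have hMono : Monotone fun n => (Gs n).1 := monotone_nat_of_le_succ hGmono
  set G : Set Ω := ⋃ n, (Gs n).1 with hG
  have hGm : MeasurableSet G := MeasurableSet.iUnion fun n => (Gs n).2.1
  have hGA : G ⊆ A := iUnion_subset fun n => (Gs n).2.2.1
  have hGt : μ G ≤ t := by
    rw [hG, hMono.directed_le.measure_iUnion]
    exact iSup_le fun n => (Gs n).2.2.2
  refine ⟨G, hGm, hGA, hGt.antisymm (not_lt.mp fun hlt : μ G < t => ?_)⟩
  -- derive contradiction
  have hAG : 0 < μ (A \ G) := by
    by_contra h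
    push_neg at h
    have h0 : μ (A \ G) = 0 := le_antisymm h (zero_le)
    have : μ A ≤ μ G := by
      calc μ A ≤ μ (G ∪ (A \ G)) := measure_mono (fun x hx => by
        by_cases hxG : x ∈ G
        · exact Or.inl hxG
        · exact Or.inr ⟨hx, hxG⟩)
      _ ≤ μ G + μ (A \ G) := measure_union_le _ _
      _ = μ G := by rw [h0, add_zero]
    exact absurd (hlt.trans_le (ht.trans this)) (lt_irrefl _)
  obtain ⟨D, hDm, hDsub, hD0, hDε⟩ := na_small hμ (hA.diff hGm) hAG (tsub_pos_of_lt hlt)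
  -- for every n, μ D ≤ δ (Gs n)
  have hδn : ∀ n, μ D ≤ δ (Gs n).1 := by
    intro n
    have hPn : P (Gs n).1 D := by
      refine ⟨hDm, hDsub.trans (diff_subset_diff_right (subset_iUnion (fun n => (Gs n).1) n)), ?_⟩
      calc μ (Gs n).1 + μ D ≤ μ G + (t - μ G) :=
            add_le_add (measure_mono (subset_iUnion (fun n => (Gs n).1) n)) hDε
      _ = t := add_tsub_cancel_of_le hlt.le
    calc μ D = ⨆ (_ : P (Gs n).1 D), μ D := by rw [iSup_pos hPn]
    _ ≤ δ (Gs n).1 := le_iSup_of_le D le_rfl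
  have hgrow : ∀ n : ℕ, (n : ℝ≥0∞) * (μ D / 2) ≤ μ (Gs n).1 := by
    intro n
    induction n with
    | zero => simp
    | succ n ih =>
      have hcast : ((n + 1 : ℕ) : ℝ≥0∞) = (n : ℝ≥0∞) + 1 := by push_cast; ring
      rw [hcast]
      calc ((n : ℝ≥0∞) + 1) * (μ D / 2) = n * (μ D / 2) + μ D / 2 := by ring
      _ ≤ μ (Gs n).1 + δ (Gs n).1 / 2 := add_le_add ih (ENNReal.div_le_div_right (hδn n) 2)
      _ ≤ μ (Gs (n+1)).1 := hGgrow n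
  have hc : μ D / 2 ≠ 0 := by
    simp only [ne_eq, ENNReal.div_eq_zero_iff, not_or]
    exact ⟨hD0.ne', ENNReal.ofNat_ne_top⟩
  have hctop : μ D / 2 ≠ ∞ := (ENNReal.div_lt_top (measure_ne_top μ D) two_ne_zero).ne
  obtain ⟨n, hn⟩ := ENNReal.exists_nat_gt (ENNReal.div_lt_top htop hc).ne
  have : (n : ℝ≥0∞) * (μ D / 2) ≤ t := (hgrow n).trans ((Gs n).2.2.2)
  rw [ENNReal.div_lt_iff (Or.inl hc) (Or.inl hctop)] at hn
  exact absurd (hn.trans_le this) (lt_irrefl _)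


lemma ennreal_div_pow_succ (a : ℝ≥0∞) (n : ℕ) : a / 2 ^ (n + 1) = a / 2 ^ n / 2 := by
  rw [pow_succ, div_eq_mul_inv, div_eq_mul_inv, div_eq_mul_inv, mul_assoc,
    ENNReal.mul_inv (by simp) (by simp)]

lemma ennreal_two_mul_half (x : ℝ≥0∞) : 2 * (x / 2) = x := by
  rw [div_eq_mul_inv, mul_comm 2, mul_assoc, ENNReal.inv_mul_cancel two_ne_zero
    ENNReal.ofNat_ne_top, mul_one]

/-- Invariants of level `n` of a dyadic chain inside `A`. -/
structure ChainLevel (κ : Measure Ω) (Good : Set Ω → Prop) (A : Set Ω) (n : ℕ)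
    (f : ℕ → Set Ω) : Prop where
  meas : ∀ k, MeasurableSet (f k)
  sub : ∀ k, f k ⊆ A
  mono : ∀ k, f k ⊆ f (k+1)
  zero : f 0 = ∅
  top : ∀ k, 2^n ≤ k → f k = A
  val : ∀ k, k ≤ 2^n → κ (f k) = k * (κ A / 2^n)
  good : ∀ k, k < 2^n → Good (f (k+1) \ f k)

variable {κ : Measure Ω} {Good : Set Ω → Prop} {A : Set Ω}

lemma chain_step [IsFiniteMeasure κ]
    (hsplit : ∀ S : Set Ω, MeasurableSet S → Good S →
      ∃ D, MeasurableSet D ∧ D ⊆ S ∧ Good D ∧ Good (S \ D) ∧ κ D = κ S / 2)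
    {n : ℕ} {f : ℕ → Set Ω} (hf : ChainLevel κ Good A n f) :
    ∃ g, ChainLevel κ Good A (n+1) g ∧ ∀ k, g (2*k) = f k := by
  classical
  have hdiffval : ∀ k, k < 2^n → κ (f (k+1) \ f k) = κ A / 2^n := by
    intro k hk
    have h1 : κ (f (k+1)) = κ (f k) + κ (f (k+1) \ f k) := by
      rw [← measure_union (disjoint_sdiff_right) ((hf.meas (k+1)).diff (hf.meas k)),
        union_diff_cancel (hf.mono k)]
    rw [hf.val (k+1) hk, hf.val k hk.le] at h1
    have h2 : ((k : ℝ≥0∞) + 1) * (κ A / 2^n) = k * (κ A / 2^n) + κ A / 2^n := by ring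
    rw [show ((k+1 : ℕ) : ℝ≥0∞) = (k : ℝ≥0∞) + 1 by push_cast; ring, h2] at h1
    exact (ENNReal.add_right_inj (ENNReal.mul_ne_top (by simp)
      (ENNReal.div_lt_top (measure_ne_top κ A) (by simp)).ne)).mp h1.symm
  have hD : ∀ k, ∃ D, MeasurableSet D ∧ D ⊆ f (k+1) \ f k ∧
      (k < 2^n → (Good D ∧ Good ((f (k+1) \ f k) \ D) ∧ κ D = κ A / 2^(n+1))) := by
    intro k
    by_cases hk : k < 2^n
    · obtain ⟨D, hDm, hDsub, hg1, hg2, hval⟩ :=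
        hsplit (f (k+1) \ f k) ((hf.meas (k+1)).diff (hf.meas k)) (hf.good k hk)
      exact ⟨D, hDm, hDsub, fun _ => ⟨hg1, hg2, by
        rw [hval, hdiffval k hk, ennreal_div_pow_succ]⟩⟩
    · exact ⟨∅, MeasurableSet.empty, empty_subset _, fun h => absurd h hk⟩
  choose D hDm hDsub hDprop using hD
  have hdisjD : ∀ j, Disjoint (f j) (D j) :=
    fun j => disjoint_sdiff_right.mono_right (hDsub j)
  have hDsubA : ∀ j, D j ⊆ A := fun j => (hDsub j).trans (diff_subset.trans (hf.sub _))
  have hhalf : κ A / 2^n = 2 * (κ A / 2^(n+1)) := by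
    rw [ennreal_div_pow_succ, ennreal_two_mul_half]
  refine ⟨fun k => if Even k then f (k/2) else f (k/2) ∪ D (k/2), ?_, ?_⟩
  swap
  · intro k
    simp [Nat.even_iff, Nat.mul_div_cancel_left k two_pos, Nat.mul_mod_right]
  constructor
  · intro k
    by_cases h : Even k <;> simp only [h, if_true, if_false]
    · exact hf.meas _
    · exact (hf.meas _).union (hDm _)
  · intro k
    by_cases h : Even k <;> simp only [h, if_true, if_false]
    · exact hf.sub _
    · exact union_subset (hf.sub _) (hDsubA _)
  · intro k
    rcases Nat.even_or_odd k with h | h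
    · obtain ⟨j, hj⟩ := h
      have hE : Even k := ⟨j, hj⟩
      have hO : ¬ Even (k+1) := by simp [Nat.even_iff] at *; omega
      have hk2 : k / 2 = j := by omega
      have hk12 : (k+1)/2 = j := by omega
      simp only [eq_true hE, eq_false hO, if_true, if_false, hk2, hk12]
      exact subset_union_left
    · obtain ⟨j, hj⟩ := h
      have hO : ¬ Even k := by simp [Nat.even_iff]; omega
      have hE : Even (k+1) := by simp [Nat.even_iff]; omega
      have hk2 : k / 2 = j := by omega
      have hk12 : (k+1)/2 = j+1 := by omega
      simp only [eq_false hO, eq_true hE, if_true, if_false, hk2, hk12]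
      exact union_subset (hf.mono j) ((hDsub j).trans diff_subset)
  · simp [hf.zero]
  · intro k hk
    have h2 : 2^n ≤ k / 2 := by rw [pow_succ] at hk; omega
    by_cases h : Even k <;> simp only [h, if_true, if_false]
    · exact hf.top _ h2
    · rw [hf.top _ h2]
      exact union_eq_left.mpr (hDsubA _)
  · intro k hk
    rcases Nat.even_or_odd k with h | h
    · obtain ⟨j, hj⟩ := h
      have hE : Even k := ⟨j, hj⟩
      have hk2 : k / 2 = j := by omega
      have hj2 : j ≤ 2^n := by rw [pow_succ] at hk; omega
      simp only [eq_true hE, if_true, hk2, hf.val j hj2]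
      have hc : (k : ℝ≥0∞) = 2 * j := by rw [hj]; push_cast; ring
      rw [hc, hhalf]; ring
    · obtain ⟨j, hj⟩ := h
      have hO : ¬ Even k := by simp [Nat.even_iff]; omega
      have hk2 : k / 2 = j := by omega
      have hj2 : j < 2^n := by rw [pow_succ] at hk; omega
      simp only [eq_false hO, if_false, hk2]
      rw [measure_union (hdisjD j) (hDm j), hf.val j hj2.le, (hDprop j hj2).2.2]
      have hc : (k : ℝ≥0∞) = 2 * j + 1 := by rw [hj]; push_cast; ring
      rw [hc, hhalf]; ring
  · intro k hk
    rcases Nat.even_or_odd k with h | h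
    · obtain ⟨j, hj⟩ := h
      have hE : Even k := ⟨j, hj⟩
      have hO : ¬ Even (k+1) := by simp [Nat.even_iff] at *; omega
      have hk2 : k / 2 = j := by omega
      have hk12 : (k+1)/2 = j := by omega
      have hj2 : j < 2^n := by rw [pow_succ] at hk; omega
      simp only [eq_true hE, eq_false hO, if_true, if_false, hk2, hk12]
      have hDj : (f j ∪ D j) \ f j = D j := by
        rw [union_diff_left, sdiff_eq_self_iff_disjoint]
        exact hdisjD j
      rw [hDj]
      exact (hDprop j hj2).1
    · obtain ⟨j, hj⟩ := h
      have hO : ¬ Even k := by simp [Nat.even_iff]; omega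
      have hE : Even (k+1) := by simp [Nat.even_iff]; omega
      have hk2 : k / 2 = j := by omega
      have hk12 : (k+1)/2 = j+1 := by omega
      have hj2 : j < 2^n := by rw [pow_succ] at hk; omega
      simp only [eq_false hO, eq_true hE, if_true, if_false, hk2, hk12]
      rw [← diff_diff]
      exact (hDprop j hj2).2.1

lemma chain_exists [IsFiniteMeasure κ] (hA : MeasurableSet A) (hGA : Good A)
    (hsplit : ∀ S : Set Ω, MeasurableSet S → Good S →
      ∃ D, MeasurableSet D ∧ D ⊆ S ∧ Good D ∧ Good (S \ D) ∧ κ D = κ S / 2) :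
    ∃ T : ℕ → ℕ → Set Ω, (∀ n, ChainLevel κ Good A n (T n)) ∧
      ∀ n k, T (n+1) (2*k) = T n k := by
  classical
  have hbase : ChainLevel κ Good A 0 (fun k => if k = 0 then ∅ else A) := by
    constructor
    · intro k; by_cases h : k = 0 <;> simp [h, hA]
    · intro k; by_cases h : k = 0 <;> simp [h]
    · intro k; by_cases h : k = 0 <;> simp [h]
    · simp
    · intro k hk; simp only [pow_zero] at hk
      simp [Nat.one_le_iff_ne_zero.mp hk]
    · intro k hk
      interval_cases k <;> simp
    · intro k hk
      simp at hk
      simp [hk, hGA]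
  choose step hstep hcompat using fun (n : ℕ) (f : ℕ → Set Ω) (hf : ChainLevel κ Good A n f) =>
    chain_step hsplit hf
  let F : (n : ℕ) → {f : ℕ → Set Ω // ChainLevel κ Good A n f} :=
    fun n => Nat.rec ⟨_, hbase⟩ (fun n p => ⟨step n p.1 p.2, hstep n p.1 p.2⟩) n
  refine ⟨fun n => (F n).1, fun n => (F n).2, fun n k => ?_⟩
  exact hcompat n (F n).1 (F n).2 k

section chainprops

variable {T : ℕ → ℕ → Set Ω} (hT : ∀ n, ChainLevel κ Good A n (T n))
  (hTc : ∀ n k, T (n+1) (2*k) = T n k)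

include hT in
lemma chain_mono_k : ∀ n k j, k ≤ j → T n k ⊆ T n j := by
  intro n k j hkj
  induction j with
  | zero => simp_all
  | succ j ih =>
    rcases Nat.lt_or_ge k (j+1) with h | h
    · exact (ih (by omega)).trans ((hT n).mono j)
    · have : k = j + 1 := by omega
      subst this; rfl

include hT hTc in
lemma chain_compat_pow : ∀ n p k, T n k = T (n + p) (2^p * k) := by
  intro n p
  induction p with
  | zero => simp
  | succ p ih =>
    intro k
    have h1 : 2^(p+1) * k = 2 * (2^p * k) := by ring
    have h2 : n + (p + 1) = (n + p) + 1 := by omega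
    rw [h1, h2, hTc (n+p) (2^p * k)]
    exact ih k


include hT hTc in
lemma chain_total : ∀ n k p j, T n k ⊆ T p j ∨ T p j ⊆ T n k := by
  intro n k p j
  rcases le_total n p with h | h
  · obtain ⟨q, rfl⟩ := Nat.exists_eq_add_of_le h
    rw [chain_compat_pow hT hTc n q k]
    rcases le_total (2^q * k) j with h2 | h2
    · exact Or.inl (chain_mono_k hT _ _ _ h2)
    · exact Or.inr (chain_mono_k hT _ _ _ h2)
  · obtain ⟨q, rfl⟩ := Nat.exists_eq_add_of_le h
    rw [chain_compat_pow hT hTc p q j]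
    rcases le_total k (2^q * j) with h2 | h2
    · exact Or.inl (chain_mono_k hT _ _ _ h2)
    · exact Or.inr (chain_mono_k hT _ _ _ h2)

end chainprops

lemma ennreal_exists_div_two_pow_le {a ε : ℝ≥0∞} (ha : a ≠ ∞) (hε : 0 < ε) :
    ∃ n : ℕ, a / 2 ^ n ≤ ε := by
  rcases eq_or_ne a 0 with rfl | h0
  · exact ⟨0, by simp⟩
  have hne : ε / a ≠ 0 := (ENNReal.div_pos hε.ne' ha).ne'
  rcases ENNReal.exists_inv_two_pow_lt hne with ⟨n, hn⟩
  refine ⟨n, ?_⟩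
  rw [ENNReal.div_le_iff_le_mul (Or.inl (by positivity)) (Or.inr hε.ne')]
  have := hn.le
  rw [ENNReal.le_div_iff_mul_le (Or.inl h0) (Or.inl ha)] at this
  calc a = 2 ^ n * (2⁻¹ ^ n * a) := by
        rw [← mul_assoc, ← mul_pow, ENNReal.mul_inv_cancel two_ne_zero ENNReal.ofNat_ne_top,
          one_pow, one_mul]
  _ ≤ 2 ^ n * ε := by gcongr
  _ = ε * 2 ^ n := mul_comm _ _

lemma two_measure_halving {ρ1 ρ2 : Measure Ω} [IsFiniteMeasure ρ1] [IsFiniteMeasure ρ2]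
    (hna : NonatomicOn (ρ1 + ρ2) m) {A : Set Ω} (hA : MeasurableSet A)
    (hG : ρ1 A = ρ2 A) :
    ∃ D, MeasurableSet D ∧ D ⊆ A ∧ ρ1 D = ρ2 D ∧ ρ1 D = ρ1 A / 2 := by
  classical
  set μ : Measure Ω := ρ1 + ρ2 with hμdef
  have hμ1 : ∀ X : Set Ω, ρ1 X ≤ μ X := fun X => by
    rw [hμdef, Measure.add_apply]; exact le_self_add
  have hμ2 : ∀ X : Set Ω, ρ2 X ≤ μ X := fun X => by
    rw [hμdef, Measure.add_apply]; exact le_add_self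
  have hsplit : ∀ S : Set Ω, MeasurableSet S → (fun _ : Set Ω => True) S →
      ∃ D, MeasurableSet D ∧ D ⊆ S ∧ (fun _ : Set Ω => True) D ∧
        (fun _ : Set Ω => True) (S \ D) ∧ μ D = μ S / 2 := by
    intro S hS _
    obtain ⟨D, hDm, hDs, hDv⟩ := na_exact hna hS (ENNReal.half_le_self (a := μ S))
    exact ⟨D, hDm, hDs, trivial, trivial, hDv⟩
  obtain ⟨T, hT, hTc⟩ := chain_exists (κ := μ) (Good := fun _ => True) hA trivial hsplit
  -- the continuum chain
  set C : ℝ → Set Ω := fun s => ⋃ (p : ℕ × ℕ) (_ : (p.2 : ℝ) ≤ s * 2 ^ p.1), T p.1 p.2 with hC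
  have hCm : ∀ s, MeasurableSet (C s) :=
    fun s => MeasurableSet.iUnion fun p => MeasurableSet.iUnion fun _ => (hT p.1).meas p.2
  have hCsubA : ∀ s, C s ⊆ A :=
    fun s => iUnion_subset fun p => iUnion_subset fun _ => (hT p.1).sub p.2
  have hCmono : ∀ {s t : ℝ}, s ≤ t → C s ⊆ C t := by
    intro s t hst
    refine iUnion_subset fun p => iUnion_subset fun hp => ?_
    refine subset_iUnion_of_subset p (subset_iUnion_of_subset ?_ subset_rfl)
    exact hp.trans (by gcongr)
  have hTC : ∀ (s : ℝ) (n k : ℕ), (k : ℝ) ≤ s * 2 ^ n → T n k ⊆ C s := by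
    intro s n k h
    exact subset_iUnion_of_subset (n, k) (subset_iUnion_of_subset h subset_rfl)
  have hC0 : C 0 = ∅ := by
    refine eq_empty_of_subset_empty (iUnion_subset fun p => iUnion_subset fun hp => ?_)
    have h2 : (p.2 : ℝ) ≤ 0 := le_of_le_of_eq hp (zero_mul _)
    have h3 : p.2 = 0 := by exact_mod_cast le_antisymm h2 (by positivity)
    rw [h3, (hT p.1).zero]
  have hC1 : C 1 = A := by
    refine subset_antisymm (hCsubA 1) ?_
    rw [← (hT 0).top 1 (by norm_num)]
    exact hTC 1 0 1 (by norm_num)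
  -- value of μ on C s
  have hval : ∀ s : ℝ, 0 ≤ s → s ≤ 1 → μ (C s) = ENNReal.ofReal s * μ A := by
    intro s h0 h1
    have hTval : ∀ (n k : ℕ), (k : ℝ) ≤ s * 2 ^ n → μ (T n k) = ENNReal.ofReal ((k : ℝ) / 2 ^ n) * μ A := by
      intro n k hk
      have hk2 : (k : ℝ) ≤ 2 ^ n := hk.trans (by nlinarith [pow_pos (by norm_num : (0:ℝ) < 2) n])
      have hkn : k ≤ 2 ^ n := by exact_mod_cast hk2
      rw [(hT n).val k hkn]
      have : ENNReal.ofReal ((k : ℝ) / 2 ^ n) = (k : ℝ≥0∞) / 2 ^ n := by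
        rw [ENNReal.ofReal_div_of_pos (by positivity), ENNReal.ofReal_natCast,
          ENNReal.ofReal_pow (by norm_num), ENNReal.ofReal_ofNat]
      rw [this, div_eq_mul_inv, div_eq_mul_inv]; ring
    have hCs : C s = ⋃ i : {p : ℕ × ℕ // (p.2 : ℝ) ≤ s * 2 ^ p.1}, T i.1.1 i.1.2 := by
      rw [hC]
      ext x
      simp only [mem_iUnion, Subtype.exists]
    have hdir : Directed (· ⊆ ·)
        (fun i : {p : ℕ × ℕ // (p.2 : ℝ) ≤ s * 2 ^ p.1} => T i.1.1 i.1.2) := by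
      intro i j
      rcases chain_total hT hTc i.1.1 i.1.2 j.1.1 j.1.2 with h | h
      · exact ⟨j, h, subset_rfl⟩
      · exact ⟨i, subset_rfl, h⟩
    refine le_antisymm ?_ ?_
    · rw [hCs, hdir.measure_iUnion]
      refine iSup_le fun i => ?_
      rw [hTval i.1.1 i.1.2 i.2]
      gcongr
      rw [div_le_iff₀ (by positivity)]
      exact i.2
    · refine ENNReal.le_of_forall_pos_le_add fun ε hε _ => ?_
      obtain ⟨n, hn⟩ := ennreal_exists_div_two_pow_le (measure_ne_top μ A)
        (ε := (ε : ℝ≥0∞)) (by exact_mod_cast hε)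
      set k := ⌊s * 2 ^ n⌋₊ with hk
      have hk_le : (k : ℝ) ≤ s * 2 ^ n := Nat.floor_le (by positivity)
      have hs_lt : s * 2 ^ n < k + 1 := Nat.lt_floor_add_one _
      have h1' : ENNReal.ofReal s * μ A ≤ ENNReal.ofReal (((k : ℝ) + 1) / 2 ^ n) * μ A := by
        gcongr
        rw [le_div_iff₀ (by positivity)]
        exact hs_lt.le
      have h2' : ENNReal.ofReal (((k : ℝ) + 1) / 2 ^ n) * μ A
          = ENNReal.ofReal ((k : ℝ) / 2 ^ n) * μ A + ENNReal.ofReal ((1 : ℝ) / 2 ^ n) * μ A := by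
        rw [add_div, ENNReal.ofReal_add (by positivity) (by positivity), add_mul]
      have h3' : ENNReal.ofReal ((1 : ℝ) / 2 ^ n) * μ A = μ A / 2 ^ n := by
        rw [ENNReal.ofReal_div_of_pos (by positivity), ENNReal.ofReal_one,
          ENNReal.ofReal_pow (by norm_num), ENNReal.ofReal_ofNat, one_div, div_eq_mul_inv,
          mul_comm]
      calc ENNReal.ofReal s * μ A ≤ _ := h1'
      _ = _ := h2'
      _ ≤ μ (C s) + (ε : ℝ≥0∞) := by
          gcongr
          · rw [← hTval n k hk_le]
            exact measure_mono (hTC s n k hk_le)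
          · rw [h3']; exact hn
  -- difference values
  have hCdiff : ∀ s t : ℝ, 0 ≤ s → s ≤ t → t ≤ 1 → μ (C t \ C s) = ENNReal.ofReal (t - s) * μ A := by
    intro s t h0 hst h1
    rw [measure_diff (hCmono hst) (hCm s).nullMeasurableSet (measure_ne_top μ _),
      hval s h0 (hst.trans h1), hval t (h0.trans hst) h1,
      ← ENNReal.sub_mul (fun _ _ => measure_ne_top μ A), ENNReal.ofReal_sub _ h0]
  -- the real-valued chain functions
  set φ : Measure Ω → ℝ → ℝ := fun ρ s => (ρ (C s)).toReal with hφ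
  have hρ_fin : ∀ (ρ : Measure Ω), (∀ X, ρ X ≤ μ X) → ∀ X : Set Ω, ρ X ≠ ∞ :=
    fun ρ hρ X => ((hρ X).trans_lt (measure_lt_top μ X)).ne
  have hφdiff : ∀ (ρ : Measure Ω), (∀ X, ρ X ≤ μ X) → ∀ s t : ℝ, s ≤ t →
      (ρ (C t \ C s)).toReal = φ ρ t - φ ρ s := by
    intro ρ hρ s t hst
    rw [measure_diff (hCmono hst) (hCm s).nullMeasurableSet (hρ_fin ρ hρ _),
      ENNReal.toReal_sub_of_le (measure_mono (hCmono hst)) (hρ_fin ρ hρ _)]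
  have hφlip : ∀ (ρ : Measure Ω), (∀ X, ρ X ≤ μ X) →
      ∀ s ∈ Icc (0:ℝ) 1, ∀ t ∈ Icc (0:ℝ) 1,
        dist (φ ρ s) (φ ρ t) ≤ (μ A).toNNReal * dist s t := by
    have key : ∀ (ρ : Measure Ω), (∀ X, ρ X ≤ μ X) →
        ∀ s ∈ Icc (0:ℝ) 1, ∀ t ∈ Icc (0:ℝ) 1, s ≤ t →
          φ ρ t - φ ρ s ≤ (μ A).toNNReal * (t - s) := by
      intro ρ hρ s hs t ht hst
      rw [← hφdiff ρ hρ s t hst]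
      have : ρ (C t \ C s) ≤ ENNReal.ofReal (t - s) * μ A := by
        rw [← hCdiff s t hs.1 hst ht.2]
        exact hρ (C t \ C s)
      calc (ρ (C t \ C s)).toReal ≤ (ENNReal.ofReal (t - s) * μ A).toReal := by
            refine ENNReal.toReal_mono ?_ this
            exact ENNReal.mul_ne_top ENNReal.ofReal_ne_top (measure_ne_top μ A)
      _ = (t - s) * (μ A).toReal := by
            rw [ENNReal.toReal_mul, ENNReal.toReal_ofReal (by linarith)]
      _ = (μ A).toNNReal * (t - s) := by rw [mul_comm]; rfl
    intro ρ hρ s hs t ht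
    rcases le_total s t with hst | hst
    · rw [Real.dist_eq, Real.dist_eq, abs_of_nonpos (by
        have := (measure_mono (hCmono hst) : ρ (C s) ≤ ρ (C t))
        have := ENNReal.toReal_mono (hρ_fin ρ hρ _) this
        simpa [hφ] using sub_nonpos.mpr this), abs_of_nonpos (by linarith)]
      have := key ρ hρ s hs t ht hst
      linarith
    · rw [Real.dist_eq, Real.dist_eq, abs_of_nonneg (by
        have := (measure_mono (hCmono hst) : ρ (C t) ≤ ρ (C s))
        have := ENNReal.toReal_mono (hρ_fin ρ hρ _) this
        simpa [hφ] using sub_nonneg.mpr this), abs_of_nonneg (by linarith)]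
      have := key ρ hρ t ht s hs hst
      linarith
  have hφcont : ∀ (ρ : Measure Ω), (∀ X, ρ X ≤ μ X) → ContinuousOn (φ ρ) (Icc 0 1) :=
    fun ρ hρ => (LipschitzOnWith.of_dist_le_mul (hφlip ρ hρ)).continuousOn
  -- the IVT argument
  set g : ℝ → ℝ := fun s => (φ ρ1 (s + 2⁻¹) - φ ρ1 s) - (φ ρ2 (s + 2⁻¹) - φ ρ2 s) with hg
  have hmaps : MapsTo (fun s : ℝ => s + 2⁻¹) (Icc 0 2⁻¹) (Icc 0 1) := by
    intro x hx
    simp only [mem_Icc] at *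
    constructor <;> linarith [hx.1, hx.2]
  have hsubI : Icc (0:ℝ) 2⁻¹ ⊆ Icc 0 1 := Icc_subset_Icc le_rfl (by norm_num)
  have hshift : ∀ (ρ : Measure Ω), (∀ X, ρ X ≤ μ X) →
      ContinuousOn (fun s => φ ρ (s + 2⁻¹)) (Icc 0 2⁻¹) :=
    fun ρ hρ => (hφcont ρ hρ).comp ((continuous_id.add continuous_const).continuousOn) hmaps
  have hgc : ContinuousOn g (Icc 0 2⁻¹) := by
    refine ContinuousOn.sub (ContinuousOn.sub (hshift ρ1 hμ1) ((hφcont ρ1 hμ1).mono hsubI))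
      (ContinuousOn.sub (hshift ρ2 hμ2) ((hφcont ρ2 hμ2).mono hsubI))
  have hφ0 : ∀ ρ : Measure Ω, φ ρ 0 = 0 := by
    intro ρ; simp [hφ, hC0]
  have hφ1' : ∀ ρ : Measure Ω, φ ρ 1 = (ρ A).toReal := by
    intro ρ; simp [hφ, hC1]
  have hgneg : g 2⁻¹ = - g 0 := by
    simp only [hg, hφ0, sub_zero, zero_add]
    rw [show (2⁻¹ : ℝ) + 2⁻¹ = 1 by norm_num, hφ1', hφ1', hG]
    ring
  have h0mem : (0:ℝ) ∈ uIcc (g 0) (g 2⁻¹) := by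
    rw [hgneg]
    rcases le_total (g 0) 0 with h | h
    · exact mem_uIcc.mpr (Or.inl ⟨h, by linarith⟩)
    · exact mem_uIcc.mpr (Or.inr ⟨by linarith, h⟩)
  have hIc : uIcc (0:ℝ) 2⁻¹ = Icc 0 2⁻¹ := uIcc_of_le (by norm_num)
  obtain ⟨s0, hs0mem, hgs0⟩ := intermediate_value_uIcc (by rw [hIc]; exact hgc) h0mem
  rw [hIc] at hs0mem
  obtain ⟨hs01, hs02⟩ := hs0mem
  have hle : s0 ≤ s0 + 2⁻¹ := by linarith
  refine ⟨C (s0 + 2⁻¹) \ C s0, (hCm _).diff (hCm _), diff_subset.trans (hCsubA _), ?_, ?_⟩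
  · -- ρ1 D = ρ2 D
    have e1 := hφdiff ρ1 hμ1 s0 (s0 + 2⁻¹) hle
    have e2 := hφdiff ρ2 hμ2 s0 (s0 + 2⁻¹) hle
    have : (ρ1 (C (s0 + 2⁻¹) \ C s0)).toReal = (ρ2 (C (s0 + 2⁻¹) \ C s0)).toReal := by
      rw [e1, e2]
      have : g s0 = 0 := hgs0
      simp only [hg] at this
      linarith
    exact (ENNReal.toReal_eq_toReal_iff' (hρ_fin ρ1 hμ1 _) (hρ_fin ρ2 hμ2 _)).mp this
  · -- ρ1 D = ρ1 A / 2
    have hμD : μ (C (s0 + 2⁻¹) \ C s0) = μ A / 2 := by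
      rw [hCdiff s0 (s0 + 2⁻¹) hs01 hle (by linarith)]
      rw [show s0 + 2⁻¹ - s0 = 2⁻¹ by ring]
      rw [ENNReal.ofReal_inv_of_pos (by norm_num), ENNReal.ofReal_ofNat,
        div_eq_mul_inv, mul_comm]
    have e1 := hφdiff ρ1 hμ1 s0 (s0 + 2⁻¹) hle
    have e2 := hφdiff ρ2 hμ2 s0 (s0 + 2⁻¹) hle
    have heq : ρ1 (C (s0 + 2⁻¹) \ C s0) = ρ2 (C (s0 + 2⁻¹) \ C s0) := by
      refine (ENNReal.toReal_eq_toReal_iff' (hρ_fin ρ1 hμ1 _) (hρ_fin ρ2 hμ2 _)).mp ?_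
      rw [e1, e2]
      have : g s0 = 0 := hgs0
      simp only [hg] at this
      linarith
    have hsum : ρ1 (C (s0 + 2⁻¹) \ C s0) + ρ2 (C (s0 + 2⁻¹) \ C s0)
        = μ (C (s0 + 2⁻¹) \ C s0) := by
      rw [hμdef, Measure.add_apply]
    have hμA : μ A = 2 * ρ1 A := by
      rw [hμdef, Measure.add_apply, ← hG, two_mul]
    have h2 : 2 * ρ1 (C (s0 + 2⁻¹) \ C s0) = ρ1 A := by
      rw [two_mul]
      nth_rewrite 2 [heq]
      rw [hsum, hμD, hμA, mul_comm 2 (ρ1 A), mul_div_assoc,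
        ENNReal.div_self two_ne_zero ENNReal.ofNat_ne_top, mul_one]
    exact (ENNReal.eq_div_iff two_ne_zero ENNReal.ofNat_ne_top).mpr h2

lemma chain_level_diff_val [IsFiniteMeasure κ] {n : ℕ} {f : ℕ → Set Ω}
    (hf : ChainLevel κ Good A n f) :
    ∀ k, k < 2^n → κ (f (k+1) \ f k) = κ A / 2^n := by
  intro k hk
  have h1 : κ (f (k+1)) = κ (f k) + κ (f (k+1) \ f k) := by
    rw [← measure_union (disjoint_sdiff_right) ((hf.meas (k+1)).diff (hf.meas k)),
      union_diff_cancel (hf.mono k)]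
  rw [hf.val (k+1) hk, hf.val k hk.le] at h1
  have h2 : ((k : ℝ≥0∞) + 1) * (κ A / 2^n) = k * (κ A / 2^n) + κ A / 2^n := by ring
  rw [show ((k+1 : ℕ) : ℝ≥0∞) = (k : ℝ≥0∞) + 1 by push_cast; ring, h2] at h1
  exact (ENNReal.add_right_inj (ENNReal.mul_ne_top (by simp)
    (ENNReal.div_lt_top (measure_ne_top κ A) (by simp)).ne)).mp h1.symm

lemma chain_level_telescope {n : ℕ} {f : ℕ → Set Ω}
    (hf : ChainLevel κ Good A n f) :
    ∀ j, ⋃ k ∈ Finset.range j, (f (k+1) \ f k) = f j := by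
  intro j
  induction j with
  | zero => simp [hf.zero]
  | succ j ih =>
    rw [Finset.range_add_one]
    simp only [Finset.mem_insert, iUnion_iUnion_eq_or_left]
    rw [ih, union_comm, union_diff_cancel (hf.mono j)]

lemma na_sum {π π' : Measure Ω} [IsFiniteMeasure π] [IsFiniteMeasure π']
    (h1 : NonatomicOn π m) (h2 : NonatomicOn π' m) : NonatomicOn (π + π') m := by
  intro E hE hpos
  rw [Measure.add_apply] at hpos
  have key : ∀ (ρ σ : Measure Ω), IsFiniteMeasure ρ → IsFiniteMeasure σ → NonatomicOn ρ m →
      0 < ρ E → ∃ F, MeasurableSet F ∧ F ⊆ E ∧ 0 < (ρ + σ) F ∧ (ρ + σ) F < (ρ + σ) E := by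
    intro ρ σ hρfin hσfin hρna hρpos
    obtain ⟨F, hFm, hFE, hF1, hF2⟩ := hρna E hE hρpos
    refine ⟨F, hFm, hFE, ?_, ?_⟩
    · rw [Measure.add_apply]
      exact lt_of_lt_of_le hF1 le_self_add
    · rw [Measure.add_apply, Measure.add_apply]
      have hσle : σ F ≤ σ E := measure_mono hFE
      calc ρ F + σ F ≤ ρ F + σ E := by gcongr
      _ < ρ E + σ E := by
          refine ENNReal.add_lt_add_right (measure_ne_top σ E) hF2
  rcases pos_iff_ne_zero.mp hpos |> fun h => (by
    by_cases hπ : 0 < π E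
    · exact Or.inl hπ
    · right
      have : π E = 0 := by simpa using (not_lt.mp hπ)
      rw [this, zero_add] at hpos
      exact hpos : 0 < π E ∨ 0 < π' E) with hc | hc
  · exact key π π' ‹_› ‹_› h1 hc
  · obtain ⟨F, hFm, hFE, hF1, hF2⟩ := key π' π ‹_› ‹_› h2 hc
    refine ⟨F, hFm, hFE, ?_, ?_⟩
    · rw [Measure.add_apply] at hF1 ⊢
      rw [add_comm]; exact hF1
    · rw [Measure.add_apply] at hF2 ⊢
      rw [Measure.add_apply] at hF2
      rw [Measure.add_apply]
      rw [add_comm (π F), add_comm (π E)]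
      exact hF2


end Aux12

theorem stmt12 {Ω : Type*} [m : MeasurableSpace Ω]
    (π π' : MeasureTheory.Measure Ω)
    (hπ : MeasureTheory.IsProbabilityMeasure π)
    (hπ' : MeasureTheory.IsProbabilityMeasure π')
    (hna : NonatomicOn π m) (hna' : NonatomicOn π' m) :
    ∃ m' : MeasurableSpace Ω, m' ≤ m ∧
      (∀ E : Set Ω, MeasurableSet[m'] E → π E = π' E) ∧
      @NonatomicOn Ω m π m' := by
  classical
  have hsum : NonatomicOn (π + π') m := na_sum hna hna'
  set Good : Set Ω → Prop := fun S => π S = π' S with hGood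
  have hsplit : ∀ S : Set Ω, MeasurableSet S → Good S →
      ∃ D, MeasurableSet D ∧ D ⊆ S ∧ Good D ∧ Good (S \ D) ∧ π D = π S / 2 := by
    intro S hS hGS
    obtain ⟨D, hDm, hDS, hD1, hD2⟩ := two_measure_halving hsum hS hGS
    refine ⟨D, hDm, hDS, hD1, ?_, hD2⟩
    show π (S \ D) = π' (S \ D)
    rw [measure_diff hDS hDm.nullMeasurableSet (measure_ne_top π D),
      measure_diff hDS hDm.nullMeasurableSet (measure_ne_top π' D), hGS, hD1]
  obtain ⟨T, hT, hTc⟩ := chain_exists (κ := π) (Good := Good) MeasurableSet.univ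
    (by rw [hGood]; simp [measure_univ]) hsplit
  set gen : Set (Set Ω) := {S | ∃ n k, S = T n k} with hgen
  have hle : MeasurableSpace.generateFrom gen ≤ m := by
    refine MeasurableSpace.generateFrom_le ?_
    rintro S ⟨n, k, rfl⟩
    exact (hT n).meas k
  have hgenmeas : ∀ n k, MeasurableSet[MeasurableSpace.generateFrom gen] (T n k) := by
    intro n k
    exact MeasurableSpace.measurableSet_generateFrom ⟨n, k, rfl⟩
  -- π' agrees with π on all chain sets
  have hval' : ∀ n k, π' (T n k) = π (T n k) := by
    intro n k
    induction k with
    | zero => rw [(hT n).zero]; simp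
    | succ k ih =>
      rcases Nat.lt_or_ge k (2^n) with hk | hk
      · have hdisj : π (T n (k+1)) = π (T n k) + π (T n (k+1) \ T n k) := by
          rw [← measure_union (disjoint_sdiff_right) (((hT n).meas (k+1)).diff ((hT n).meas k)),
            union_diff_cancel ((hT n).mono k)]
        have hdisj' : π' (T n (k+1)) = π' (T n k) + π' (T n (k+1) \ T n k) := by
          rw [← measure_union (disjoint_sdiff_right) (((hT n).meas (k+1)).diff ((hT n).meas k)),
            union_diff_cancel ((hT n).mono k)]
        rw [hdisj, hdisj', ih, ((hT n).good k hk).symm]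
      · rw [(hT n).top (k+1) (by omega)]
        simp [measure_univ]
  -- the σ-algebra equality via the π-system uniqueness
  have hPi : IsPiSystem gen := by
    rintro s ⟨n, k, rfl⟩ t ⟨p, j, rfl⟩ _
    rcases chain_total hT hTc n k p j with h | h
    · rw [inter_eq_self_of_subset_left h]; exact ⟨n, k, rfl⟩
    · rw [inter_eq_self_of_subset_right h]; exact ⟨p, j, rfl⟩
  have hagree : ∀ E : Set Ω, MeasurableSet[MeasurableSpace.generateFrom gen] E → π E = π' E := by
    have htrim : π.trim hle = π'.trim hle := by
      refine ext_of_generate_finite gen rfl hPi ?_ ?_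
      · rintro S ⟨n, k, rfl⟩
        rw [trim_measurableSet_eq hle (hgenmeas n k), trim_measurableSet_eq hle (hgenmeas n k),
          hval' n k]
      · rw [trim_measurableSet_eq hle MeasurableSet.univ,
          trim_measurableSet_eq hle MeasurableSet.univ, measure_univ, measure_univ]
    intro E hE
    rw [← trim_measurableSet_eq hle hE, ← trim_measurableSet_eq hle hE, htrim]
  refine ⟨MeasurableSpace.generateFrom gen, hle, hagree, ?_⟩
  -- nonatomicity on m'
  intro E hE hpos
  obtain ⟨n, hn⟩ := ENNReal.exists_inv_two_pow_lt hpos.ne'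
  have hcell : ∀ k, k < 2^n → π (T n (k+1) \ T n k) = 2⁻¹ ^ n := by
    intro k hk
    rw [chain_level_diff_val (hT n) k hk, measure_univ, one_div, ENNReal.inv_pow]
  have hcover : E = ⋃ k ∈ Finset.range (2^n), E ∩ (T n (k+1) \ T n k) := by
    have := chain_level_telescope (hT n) (2^n)
    rw [(hT n).top (2^n) le_rfl] at this
    calc E = E ∩ univ := (inter_univ E).symm
    _ = E ∩ ⋃ k ∈ Finset.range (2^n), (T n (k+1) \ T n k) := by rw [this]
    _ = ⋃ k ∈ Finset.range (2^n), E ∩ (T n (k+1) \ T n k) := by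
        rw [inter_iUnion₂]
  obtain ⟨k, hkmem, hkpos⟩ : ∃ k ∈ Finset.range (2^n), 0 < π (E ∩ (T n (k+1) \ T n k)) := by
    by_contra hall
    push_neg at hall
    have hz : ∀ k ∈ Finset.range (2^n), π (E ∩ (T n (k+1) \ T n k)) = 0 :=
      fun k hk => le_antisymm (hall k hk) (zero_le)
    have : π E = 0 := by
      rw [hcover]
      refine le_antisymm (le_trans (measure_biUnion_finset_le _ _) ?_) (zero_le)
      rw [Finset.sum_eq_zero hz]
    exact absurd this hpos.ne'
  refine ⟨E ∩ (T n (k+1) \ T n k), ?_, inter_subset_left, hkpos, ?_⟩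
  · exact MeasurableSet.inter hE (MeasurableSet.diff (hgenmeas n (k+1)) (hgenmeas n k))
  · calc π (E ∩ (T n (k+1) \ T n k)) ≤ π (T n (k+1) \ T n k) := measure_mono inter_subset_right
    _ = 2⁻¹ ^ n := hcell k (Finset.mem_range.mp hkmem)
    _ < π E := hn
end

section
/- Let π and π' be non-atomic countably additive probability measures on a measurable space (Ω, ℰ). Then there exists a sequence of finite measurable partitions (P_k)_{k≥0} of Ω such that P_k = {E_k^1, …, E_k^{2^k}} consists of 2^k cells, P_{k+1} refines P_k, and π(E_k^m) = π'(E_k^m) = 2^{−k} for every k ≥ 0 and every m ∈ {1, …, 2^k}. -/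
open MeasureTheory

open ENNReal

section Helpers
variable {Ω : Type*} [m : MeasurableSpace Ω] {σ : Measure Ω}

lemma half_piece (hσ : NonatomicOn σ m) {A : Set Ω} (hA : MeasurableSet A)
    (hpos : 0 < σ A) (hfin : σ A ≠ ∞) :
    ∃ C, MeasurableSet C ∧ C ⊆ A ∧ 0 < σ C ∧ σ C ≤ σ A / 2 := by
  obtain ⟨F, hFm, hFs, hF0, hFlt⟩ := hσ A hA hpos
  have hFfin : σ F ≠ ∞ := (hFlt.trans_le le_top).ne
  have hdiff : σ (A \ F) = σ A - σ F := measure_diff hFs hFm.nullMeasurableSet hFfin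
  have hd0 : 0 < σ (A \ F) := by rw [hdiff]; exact tsub_pos_of_lt hFlt
  have hsum : σ F + σ (A \ F) = σ A := by
    rw [hdiff, add_tsub_cancel_of_le hFlt.le]
  rcases le_or_gt (σ F) (σ A / 2) with h | h
  · exact ⟨F, hFm, hFs, hF0, h⟩
  · refine ⟨A \ F, hA.diff hFm, Set.diff_subset, hd0, ?_⟩
    by_contra hc
    push_neg at hc
    have := ENNReal.add_lt_add h hc
    rw [hsum, ENNReal.add_halves] at this
    exact lt_irrefl _ this

lemma small_piece (hσ : NonatomicOn σ m) {A : Set Ω} (hA : MeasurableSet A)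
    (hpos : 0 < σ A) (hfin : σ A ≠ ∞) {ε : ℝ≥0∞} (hε : 0 < ε) :
    ∃ C, MeasurableSet C ∧ C ⊆ A ∧ 0 < σ C ∧ σ C ≤ ε := by
  have key : ∀ n : ℕ, ∃ C, MeasurableSet C ∧ C ⊆ A ∧ 0 < σ C ∧ σ C ≤ σ A * 2⁻¹ ^ n := by
    intro n
    induction n with
    | zero => exact ⟨A, hA, subset_rfl, hpos, by simp⟩
    | succ n ih =>
      obtain ⟨C, hCm, hCs, hC0, hCle⟩ := ih
      have hCfin : σ C ≠ ∞ := ((measure_mono hCs).trans_lt hfin.lt_top).ne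
      obtain ⟨D, hDm, hDs, hD0, hDle⟩ := half_piece hσ hCm hC0 hCfin
      refine ⟨D, hDm, hDs.trans hCs, hD0, ?_⟩
      calc σ D ≤ σ C / 2 := hDle
        _ ≤ σ A * 2⁻¹ ^ n / 2 := by gcongr
        _ = σ A * 2⁻¹ ^ (n + 1) := by
          rw [pow_succ, ← mul_assoc, ENNReal.div_eq_inv_mul, mul_comm]
  obtain ⟨n, hn⟩ : ∃ n : ℕ, σ A * 2⁻¹ ^ n ≤ ε := by
    obtain ⟨n, hn⟩ := ENNReal.exists_inv_two_pow_lt (a := ε / σ A) (by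
      simp only [ne_eq, ENNReal.div_eq_zero_iff]
      push_neg
      exact ⟨hε.ne', hfin⟩)
    refine ⟨n, ?_⟩
    calc σ A * 2⁻¹ ^ n ≤ σ A * (ε / σ A) := by gcongr
      _ ≤ ε := ENNReal.mul_div_le
  obtain ⟨C, h1, h2, h3, h4⟩ := key n
  exact ⟨C, h1, h2, h3, h4.trans hn⟩


lemma step_exists {A : Set Ω} {r : ℝ≥0∞} (hr : r ≠ ∞) {C : Set Ω}
    (hCm : MeasurableSet C) (hCr : σ C ≤ r) :
    ∃ D : Set Ω, MeasurableSet D ∧ D ⊆ A \ C ∧ σ C + σ D ≤ r ∧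
      ∀ D', MeasurableSet D' → D' ⊆ A \ C → σ C + σ D' ≤ r → σ D' ≤ 2 * σ D := by
  classical
  set T := {D' : Set Ω | MeasurableSet D' ∧ D' ⊆ A \ C ∧ σ C + σ D' ≤ r} with hT
  set δ := ⨆ D' : T, σ D'.1 with hδ
  have hδle : δ ≤ r := by
    apply iSup_le
    rintro ⟨D', hD'm, hD's, hD'r⟩
    exact le_trans (le_add_left le_rfl) hD'r
  have hδfin : δ ≠ ∞ := (hδle.trans_lt hr.lt_top).ne
  rcases eq_or_ne δ 0 with h0 | h0
  · refine ⟨∅, MeasurableSet.empty, Set.empty_subset _, by simpa using hCr, ?_⟩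
    intro D' hD'm hD's hD'r
    have : σ D' ≤ δ := le_iSup (fun D : T => σ D.1) ⟨D', hD'm, hD's, hD'r⟩
    simp [h0] at this
    simp [this]
  · have hlt : δ / 2 < δ := ENNReal.half_lt_self h0 hδfin
    obtain ⟨⟨D, hDm, hDs, hDr⟩, hD⟩ := lt_iSup_iff.mp hlt
    refine ⟨D, hDm, hDs, hDr, ?_⟩
    intro D' hD'm hD's hD'r
    have h1 : σ D' ≤ δ := le_iSup (fun D : T => σ D.1) ⟨D', hD'm, hD's, hD'r⟩
    calc σ D' ≤ δ := h1
      _ = 2 * (δ / 2) := (ENNReal.mul_div_cancel' (by norm_num) (by norm_num)).symm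
      _ ≤ 2 * σ D := by gcongr

lemma exact_piece' (hσ : NonatomicOn σ m) {A : Set Ω} (hA : MeasurableSet A)
    (hfin : σ A ≠ ∞) {r : ℝ≥0∞} (hr : r ≤ σ A) :
    ∃ C, MeasurableSet C ∧ C ⊆ A ∧ σ C = r := by
  classical
  have hrfin : r ≠ ∞ := (hr.trans_lt hfin.lt_top).ne
  let S := {C : Set Ω // MeasurableSet C ∧ C ⊆ A ∧ σ C ≤ r}
  have hex : ∀ C : S, ∃ D : Set Ω, MeasurableSet D ∧ D ⊆ A \ C.1 ∧ σ C.1 + σ D ≤ r ∧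
      ∀ D', MeasurableSet D' → D' ⊆ A \ C.1 → σ C.1 + σ D' ≤ r → σ D' ≤ 2 * σ D :=
    fun C => step_exists hrfin C.2.1 C.2.2.2
  let Dn : S → Set Ω := fun C => Classical.choose (hex C)
  have hDn : ∀ C : S, MeasurableSet (Dn C) ∧ Dn C ⊆ A \ C.1 ∧ σ C.1 + σ (Dn C) ≤ r ∧
      ∀ D', MeasurableSet D' → D' ⊆ A \ C.1 → σ C.1 + σ D' ≤ r → σ D' ≤ 2 * σ (Dn C) :=
    fun C => Classical.choose_spec (hex C)
  have hdisj : ∀ C : S, Disjoint C.1 (Dn C) :=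
    fun C => Set.disjoint_of_subset_right (hDn C).2.1 Set.disjoint_sdiff_right
  have hmeq : ∀ C : S, σ (C.1 ∪ Dn C) = σ C.1 + σ (Dn C) :=
    fun C => measure_union (hdisj C) (hDn C).1
  let f : S → S := fun C =>
    ⟨C.1 ∪ Dn C, (C.2.1.union (hDn C).1),
      Set.union_subset C.2.2.1 ((hDn C).2.1.trans Set.diff_subset),
      by rw [hmeq C]; exact (hDn C).2.2.1⟩
  let c : ℕ → S := fun n => f^[n] ⟨∅, MeasurableSet.empty, Set.empty_subset _, by simp⟩
  have hstep : ∀ n, c (n + 1) = f (c n) := fun n => Function.iterate_succ_apply' f n _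
  have hstep1 : ∀ n, (c (n + 1)).1 = (c n).1 ∪ Dn (c n) := fun n => by rw [hstep n]
  have hmono : Monotone fun n => (c n).1 := by
    apply monotone_nat_of_le_succ
    intro n
    rw [hstep1 n]
    exact Set.subset_union_left
  set L := ⋃ n, (c n).1 with hL
  have hLm : MeasurableSet L := MeasurableSet.iUnion fun n => (c n).2.1
  have hLs : L ⊆ A := Set.iUnion_subset fun n => (c n).2.2.1
  have hLσ : σ L = ⨆ n, σ (c n).1 := hmono.directed_le.measure_iUnion
  have hLr : σ L ≤ r := by rw [hLσ]; exact iSup_le fun n => (c n).2.2.2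
  rcases eq_or_lt_of_le hLr with heq | hlt
  · exact ⟨L, hLm, hLs, heq⟩
  · exfalso
    have hLfin : σ L ≠ ∞ := (hLr.trans_lt hrfin.lt_top).ne
    have hALpos : 0 < σ (A \ L) := by
      have h1 : σ (A \ L) = σ A - σ L := measure_diff hLs hLm.nullMeasurableSet hLfin
      rw [h1]
      exact tsub_pos_of_lt (hlt.trans_le hr)
    obtain ⟨D, hDm, hDs, hD0, hDle⟩ := small_piece hσ (hA.diff hLm) hALpos
      ((measure_mono Set.diff_subset).trans_lt hfin.lt_top).ne (tsub_pos_of_lt hlt)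
    -- D is a candidate at every stage
    have hcand : ∀ n, σ D ≤ 2 * σ (Dn (c n)) := by
      intro n
      refine (hDn (c n)).2.2.2 D hDm
        (hDs.trans (Set.diff_subset_diff_right (Set.subset_iUnion (fun k => (c k).1) n))) ?_
      calc σ (c n).1 + σ D ≤ σ L + (r - σ L) :=
            add_le_add (measure_mono (Set.subset_iUnion (fun k => (c k).1) n)) hDle
        _ = r := add_tsub_cancel_of_le hlt.le
    set a := σ D / 2 with ha
    have ha0 : a ≠ 0 := by
      rw [ha]
      simp only [ne_eq, ENNReal.div_eq_zero_iff]
      push_neg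
      exact ⟨hD0.ne', by norm_num⟩
    have hafin : a ≠ ∞ := by
      rw [ha]
      exact (ENNReal.div_lt_top ((hDle.trans_lt (tsub_le_self.trans_lt hrfin.lt_top)).ne)
        (by norm_num)).ne
    have hlow : ∀ n : ℕ, (n : ℝ≥0∞) * a ≤ σ (c n).1 := by
      intro n
      induction n with
      | zero => simp
      | succ n ih =>
        have h2 : a ≤ σ (Dn (c n)) := by
          rw [ha, ENNReal.div_le_iff_le_mul (Or.inl (two_ne_zero)) (Or.inl (by norm_num)),
            mul_comm]
          exact hcand n
        calc ((n + 1 : ℕ) : ℝ≥0∞) * a = (n : ℝ≥0∞) * a + a := by push_cast; ring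
          _ ≤ σ (c n).1 + σ (Dn (c n)) := add_le_add ih h2
          _ = σ (c (n + 1)).1 := by rw [hstep1 n, hmeq (c n)]
    obtain ⟨n, hn⟩ := ENNReal.exists_nat_gt (ENNReal.div_lt_top hrfin ha0).ne
    have : r < n * a := by
      rwa [ENNReal.div_lt_iff (Or.inl ha0) (Or.inl hafin)] at hn
    exact absurd ((hlow n).trans (c n).2.2.2) (not_le.mpr this)

lemma two_halves (s : ℝ≥0∞) (n : ℕ) : 2 * (s / 2 ^ (n + 1)) = s / 2 ^ n := by
  rw [ENNReal.div_eq_inv_mul, ENNReal.div_eq_inv_mul, ← mul_assoc, pow_succ,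
    ENNReal.mul_inv (by simp) (by simp)]
  rw [mul_comm ((2:ℝ≥0∞)^n)⁻¹ 2⁻¹, ← mul_assoc,
    ENNReal.mul_inv_cancel (by norm_num) (by norm_num), one_mul]

lemma dyadic_family (hσ : NonatomicOn σ m) {A : Set Ω} (hA : MeasurableSet A) (hfin : σ A ≠ ∞) :
    ∃ g : ℕ → ℕ → Set Ω,
      (∀ n k, MeasurableSet (g n k)) ∧
      (∀ n k, g n k ⊆ A) ∧
      (∀ n k, g n k ⊆ g n (k + 1)) ∧
      (∀ n k, g (n + 1) (2 * k) = g n k) ∧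
      (∀ n, g n 0 = ∅) ∧
      (∀ n k, k ≤ 2 ^ n → σ (g n k) = k * (σ A / 2 ^ n)) := by
  classical
  -- a total "choice of exact piece" function
  have hpick : ∀ X : Set Ω, ∀ r : ℝ≥0∞, ∃ C, MeasurableSet C ∧ C ⊆ X ∧
      (MeasurableSet X → σ X ≠ ∞ → r ≤ σ X → σ C = r) := by
    intro X r
    by_cases h : MeasurableSet X ∧ σ X ≠ ∞ ∧ r ≤ σ X
    · obtain ⟨C, h1, h2, h3⟩ := exact_piece' hσ h.1 h.2.1 h.2.2
      exact ⟨C, h1, h2, fun _ _ _ => h3⟩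
    · exact ⟨∅, MeasurableSet.empty, Set.empty_subset _,
        fun h1 h2 h3 => absurd ⟨h1, h2, h3⟩ h⟩
  choose pick pickm picks pickv using hpick
  set g : ℕ → ℕ → Set Ω := fun n => Nat.rec (motive := fun _ => ℕ → Set Ω)
    (fun k => if k = 0 then ∅ else A)
    (fun n gn k => if k % 2 = 0 then gn (k / 2)
      else gn (k / 2) ∪ pick (gn (k / 2 + 1) \ gn (k / 2)) (σ A / 2 ^ (n + 1))) n
    with hg
  have g0 : ∀ k, g 0 k = if k = 0 then ∅ else A := fun k => rfl
  have gsucc : ∀ n k, g (n + 1) k = if k % 2 = 0 then g n (k / 2)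
      else g n (k / 2) ∪ pick (g n (k / 2 + 1) \ g n (k / 2)) (σ A / 2 ^ (n + 1)) :=
    fun n k => rfl
  have gmeas : ∀ n k, MeasurableSet (g n k) := by
    intro n
    induction n with
    | zero => intro k; rw [g0]; split <;> simp [hA]
    | succ n ih =>
      intro k
      rw [gsucc]
      split
      · exact ih _
      · exact (ih _).union (pickm _ _)
  have gsubA : ∀ n k, g n k ⊆ A := by
    intro n
    induction n with
    | zero => intro k; rw [g0]; split <;> simp
    | succ n ih =>
      intro k
      rw [gsucc]
      split
      · exact ih _
      · exact Set.union_subset (ih _)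
          (((picks _ _).trans Set.diff_subset).trans (ih _))
  have gmono : ∀ n k, g n k ⊆ g n (k + 1) := by
    intro n
    induction n with
    | zero =>
      intro k
      rw [g0, g0]
      split
      · split <;> simp
      · split
        · omega
        · exact subset_rfl
    | succ n ih =>
      intro k
      rcases Nat.even_or_odd k with ⟨j, hj⟩ | ⟨j, hj⟩
      · subst hj
        rw [gsucc, gsucc]
        have h1 : (j + j) % 2 = 0 := by omega
        have h2 : (j + j + 1) % 2 ≠ 0 := by omega
        have h3 : (j + j) / 2 = j := by omega
        have h4 : (j + j + 1) / 2 = j := by omega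
        simp only [h1, h2, h3, h4, if_true, if_false, if_neg h2]
        exact Set.subset_union_left
      · subst hj
        rw [gsucc, gsucc]
        have h1 : (2 * j + 1) % 2 ≠ 0 := by omega
        have h2 : (2 * j + 1 + 1) % 2 = 0 := by omega
        have h3 : (2 * j + 1) / 2 = j := by omega
        have h4 : (2 * j + 1 + 1) / 2 = j + 1 := by omega
        simp only [h3, h4, if_neg h1, if_pos h2]
        exact Set.union_subset ((ih j).trans subset_rfl)
          ((picks _ _).trans Set.diff_subset)
  have gnest : ∀ n k, g (n + 1) (2 * k) = g n k := by
    intro n k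
    rw [gsucc]
    have h1 : (2 * k) % 2 = 0 := by omega
    have h2 : (2 * k) / 2 = k := by omega
    simp only [h1, h2, if_true]
  have gzero : ∀ n, g n 0 = ∅ := by
    intro n
    induction n with
    | zero => rw [g0]; simp
    | succ n ih => have := gnest n 0; rw [mul_zero] at this; rw [this, ih]
  have gmeasure : ∀ n k, k ≤ 2 ^ n → σ (g n k) = k * (σ A / 2 ^ n) := by
    intro n
    induction n with
    | zero =>
      intro k hk
      interval_cases k
      · rw [g0]; simp
      · rw [g0]; simp
    | succ n ih =>
      intro k hk
      rcases Nat.even_or_odd k with ⟨j, hj⟩ | ⟨j, hj⟩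
      · have hj' : k = 2 * j := by omega
        subst hj'
        rw [gnest, ih j (by omega)]
        push_cast
        rw [show (2:ℝ≥0∞) * ↑j * (σ A / 2 ^ (n + 1)) = ↑j * (2 * (σ A / 2 ^ (n + 1))) by ring,
          two_halves]
      · subst hj
        have hjle : j + 1 ≤ 2 ^ n := by
          have h2n : 2 * j + 1 ≤ 2 * 2 ^ n := by rw [← pow_succ']; exact hk
          omega
        -- the gap set
        set X := g n (j + 1) \ g n j with hX
        have hXm : MeasurableSet X := (gmeas n (j + 1)).diff (gmeas n j)
        have hgjfin : σ (g n j) ≠ ∞ := ((measure_mono (gsubA n j)).trans_lt hfin.lt_top).ne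
        have hXv : σ X = σ A / 2 ^ n := by
          rw [hX, measure_diff (gmono n j) (gmeas n j).nullMeasurableSet hgjfin,
            ih (j + 1) hjle, ih j (by omega)]
          push_cast
          have hjufin : (j : ℝ≥0∞) * (σ A / 2 ^ n) ≠ ∞ :=
            (ENNReal.mul_lt_top (by simp) (ENNReal.div_lt_top hfin (by positivity))).ne
          rw [add_mul, one_mul, ENNReal.add_sub_cancel_left hjufin]
        have hXfin : σ X ≠ ∞ := by
          rw [hXv]
          exact (ENNReal.div_lt_top hfin (by positivity)).ne
        have hrle : σ A / 2 ^ (n + 1) ≤ σ X := by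
          rw [hXv, ← two_halves (σ A) n]
          calc σ A / 2 ^ (n+1) = 1 * (σ A / 2 ^ (n+1)) := (one_mul _).symm
            _ ≤ 2 * (σ A / 2 ^ (n+1)) := by gcongr <;> norm_num
        have hpv : σ (pick X (σ A / 2 ^ (n + 1))) = σ A / 2 ^ (n + 1) :=
          pickv _ _ hXm hXfin hrle
        have h1 : (2 * j + 1) % 2 ≠ 0 := by omega
        have h3 : (2 * j + 1) / 2 = j := by omega
        rw [gsucc]
        simp only [h3, if_neg h1]
        have hdisj : Disjoint (g n j) (pick X (σ A / 2 ^ (n + 1))) :=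
          Set.disjoint_of_subset_right (picks _ _)
            (by rw [hX]; exact Set.disjoint_sdiff_right)
        rw [measure_union hdisj (pickm _ _), ih j (by omega), hpv]
        have : (j : ℝ≥0∞) * (σ A / 2 ^ n) = (2 * j) * (σ A / 2 ^ (n + 1)) := by
          rw [← two_halves (σ A) n]
          ring
        rw [this]
        push_cast
        ring
  exact ⟨g, gmeas, gsubA, gmono, gnest, gzero, gmeasure⟩

lemma halve_s13 {π π' : Measure Ω} [IsFiniteMeasure π] [IsFiniteMeasure π']
    {A : Set Ω} (hA : MeasurableSet A)
    (hdy : ∃ g : ℕ → ℕ → Set Ω,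
      (∀ n k, MeasurableSet (g n k)) ∧
      (∀ n k, g n k ⊆ A) ∧
      (∀ n k, g n k ⊆ g n (k + 1)) ∧
      (∀ n k, g (n + 1) (2 * k) = g n k) ∧
      (∀ n, g n 0 = ∅) ∧
      (∀ n k, k ≤ 2 ^ n → (π + π') (g n k) = k * ((π + π') A / 2 ^ n))) :
    ∃ H, MeasurableSet H ∧ H ⊆ A ∧ π H = π A / 2 ∧ π' H = π' A / 2 := by
  classical
  set σ := π + π' with hσdef
  have hσap : ∀ s : Set Ω, σ s = π s + π' s := fun s => by
    rw [hσdef]; rfl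
  have hπσ : ∀ s : Set Ω, π s ≤ σ s := fun s => by rw [hσap]; exact le_self_add
  have hfin : σ A ≠ ∞ := by
    rw [hσap]
    exact (ENNReal.add_lt_top.mpr ⟨measure_lt_top _ _, measure_lt_top _ _⟩).ne
  obtain ⟨g, gmeas, gsubA, gmono, gnest, gzero, gmeasure⟩ := hdy
  have gmonoK : ∀ n, Monotone (g n) := fun n => monotone_nat_of_le_succ (gmono n)
  set F : ℝ → Set Ω := fun t => ⋃ n, g n ⌊t * 2 ^ n⌋₊ with hF
  have Fmeas : ∀ t, MeasurableSet (F t) := fun t => MeasurableSet.iUnion fun n => gmeas _ _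
  have FsubA : ∀ t, F t ⊆ A := fun t => Set.iUnion_subset fun n => gsubA _ _
  have chain : ∀ t : ℝ, 0 ≤ t → Monotone fun n => g n ⌊t * 2 ^ n⌋₊ := by
    intro t ht
    apply monotone_nat_of_le_succ
    intro n
    have h1 : g n ⌊t * 2 ^ n⌋₊ = g (n + 1) (2 * ⌊t * 2 ^ n⌋₊) := (gnest n _).symm
    rw [h1]
    apply gmonoK (n + 1)
    apply Nat.le_floor
    push_cast
    calc (2 : ℝ) * ⌊t * 2 ^ n⌋₊ ≤ 2 * (t * 2 ^ n) := by
          gcongr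
          exact Nat.floor_le (by positivity)
      _ = t * 2 ^ (n + 1) := by ring
  have Fmono : ∀ t t' : ℝ, t ≤ t' → F t ⊆ F t' := by
    intro t t' h
    apply Set.iUnion_mono
    intro n
    exact gmonoK n (Nat.floor_mono (mul_le_mul_of_nonneg_right h (by positivity)))
  have F0 : F 0 = ∅ := by
    rw [hF]
    simp only [zero_mul, Nat.floor_zero]
    simp [gzero]
  have cancel : ∀ n : ℕ, (2 : ℝ≥0∞) ^ n * (σ A / 2 ^ n) = σ A :=
    fun n => ENNReal.mul_div_cancel' (by simp) (by simp)
  have Fσ : ∀ t : ℝ, 0 ≤ t → t ≤ 1 → σ (F t) = ENNReal.ofReal t * σ A := by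
    intro t ht ht1
    have hfl : ∀ n : ℕ, ⌊t * 2 ^ n⌋₊ ≤ 2 ^ n := by
      intro n
      have : t * 2 ^ n ≤ ((2 ^ n : ℕ) : ℝ) := by push_cast; nlinarith [pow_pos (by norm_num : (0:ℝ) < 2) n]
      calc ⌊t * 2 ^ n⌋₊ ≤ ⌊((2 ^ n : ℕ) : ℝ)⌋₊ := Nat.floor_mono this
        _ = 2 ^ n := Nat.floor_natCast _
    have hiU : σ (F t) = ⨆ n, σ (g n ⌊t * 2 ^ n⌋₊) := (chain t ht).directed_le.measure_iUnion
    have hval : ∀ n, σ (g n ⌊t * 2 ^ n⌋₊) = (⌊t * 2 ^ n⌋₊ : ℝ≥0∞) * (σ A / 2 ^ n) :=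
      fun n => gmeasure n _ (hfl n)
    have hpow : ∀ n : ℕ, ((2 : ℝ≥0∞)) ^ n = ENNReal.ofReal ((2:ℝ) ^ n) := by
      intro n
      rw [ENNReal.ofReal_pow (by norm_num)]
      norm_num
    apply le_antisymm
    · rw [hiU]
      apply iSup_le
      intro n
      rw [hval n]
      have h1 : (⌊t * 2 ^ n⌋₊ : ℝ≥0∞) ≤ ENNReal.ofReal t * 2 ^ n := by
        rw [← ENNReal.ofReal_natCast, hpow, ← ENNReal.ofReal_mul ht]
        exact ENNReal.ofReal_le_ofReal (Nat.floor_le (by positivity))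
      calc (⌊t * 2 ^ n⌋₊ : ℝ≥0∞) * (σ A / 2 ^ n) ≤ ENNReal.ofReal t * 2 ^ n * (σ A / 2 ^ n) := by
            gcongr
        _ = ENNReal.ofReal t * σ A := by rw [mul_assoc, cancel n]
    · apply ENNReal.le_of_forall_pos_le_add
      intro ε hε _
      rcases eq_or_ne (σ A) 0 with h0 | h0
      · simp [h0]
      obtain ⟨n, hn⟩ := ENNReal.exists_inv_two_pow_lt (a := (ε : ℝ≥0∞) / σ A) (by
        simp only [ne_eq, ENNReal.div_eq_zero_iff]
        push_neg
        exact ⟨by exact_mod_cast hε.ne', hfin⟩)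
      have hεn : σ A / 2 ^ n ≤ (ε : ℝ≥0∞) := by
        rw [div_eq_mul_inv, ENNReal.inv_pow]
        calc σ A * (2⁻¹ : ℝ≥0∞) ^ n ≤ σ A * ((ε : ℝ≥0∞) / σ A) := by gcongr
          _ ≤ ε := ENNReal.mul_div_le
      have h2 : ENNReal.ofReal t * σ A ≤ ((⌊t * 2 ^ n⌋₊ : ℝ≥0∞) + 1) * (σ A / 2 ^ n) := by
        have hstep : ENNReal.ofReal t * 2 ^ n ≤ (⌊t * 2 ^ n⌋₊ : ℝ≥0∞) + 1 := by
          rw [hpow, ← ENNReal.ofReal_mul ht]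
          calc ENNReal.ofReal (t * 2 ^ n) ≤ ENNReal.ofReal ((⌊t * 2 ^ n⌋₊ : ℝ) + 1) :=
                ENNReal.ofReal_le_ofReal (Nat.lt_floor_add_one _).le
            _ = (⌊t * 2 ^ n⌋₊ : ℝ≥0∞) + 1 := by
                rw [ENNReal.ofReal_add (by positivity) zero_le_one]
                simp [ENNReal.ofReal_natCast]
        calc ENNReal.ofReal t * σ A = (ENNReal.ofReal t * 2 ^ n) * (σ A / 2 ^ n) := by
              rw [mul_assoc, cancel n]
          _ ≤ ((⌊t * 2 ^ n⌋₊ : ℝ≥0∞) + 1) * (σ A / 2 ^ n) := by gcongr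
      calc ENNReal.ofReal t * σ A ≤ ((⌊t * 2 ^ n⌋₊ : ℝ≥0∞) + 1) * (σ A / 2 ^ n) := h2
        _ = (⌊t * 2 ^ n⌋₊ : ℝ≥0∞) * (σ A / 2 ^ n) + σ A / 2 ^ n := by rw [add_mul, one_mul]
        _ ≤ σ (F t) + ε := by
            gcongr
            rw [← hval n]
            exact measure_mono (Set.subset_iUnion (fun k => g k ⌊t * 2 ^ k⌋₊) n)
  -- decomposition facts
  have σdiff : ∀ t t' : ℝ, 0 ≤ t → t ≤ t' → t' ≤ 1 →
      σ (F t' \ F t) = ENNReal.ofReal (t' - t) * σ A := by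
    intro t t' ht htt' ht1
    have hsub := Fmono t t' htt'
    have hfin' : σ (F t) ≠ ∞ := ((measure_mono (FsubA t)).trans_lt hfin.lt_top).ne
    have h1 : σ (F t' \ F t) = σ (F t') - σ (F t) :=
      measure_diff hsub (Fmeas t).nullMeasurableSet hfin'
    rw [h1, Fσ t ht (le_trans htt' ht1), Fσ t' (le_trans ht htt') ht1]
    have h2 : ENNReal.ofReal t' = ENNReal.ofReal t + ENNReal.ofReal (t' - t) := by
      rw [← ENNReal.ofReal_add ht (by linarith)]
      ring_nf
    rw [h2, add_mul]
    exact ENNReal.add_sub_cancel_left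
      ((ENNReal.mul_lt_top ENNReal.ofReal_lt_top hfin.lt_top)).ne
  have πdecomp : ∀ (μ : Measure Ω), ∀ t t' : ℝ, t ≤ t' →
      μ (F t') = μ (F t) + μ (F t' \ F t) := by
    intro μ t t' htt'
    conv_lhs => rw [← Set.union_diff_cancel (Fmono t t' htt')]
    exact measure_union Set.disjoint_sdiff_right ((Fmeas t').diff (Fmeas t))
  set φ : ℝ → ℝ := fun t => (π (F t)).toReal with hφ
  have hlip : ∀ t t' : ℝ, 0 ≤ t → t ≤ t' → t' ≤ 1 →
      φ t ≤ φ t' ∧ φ t' - φ t ≤ (t' - t) * (σ A).toReal := by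
    intro t t' ht htt' ht1
    have hd := πdecomp π t t' htt'
    have h1 : φ t' = φ t + (π (F t' \ F t)).toReal := by
      rw [hφ]
      simp only
      rw [hd, ENNReal.toReal_add (measure_ne_top _ _) (measure_ne_top _ _)]
    constructor
    · rw [h1]
      have := ENNReal.toReal_nonneg (a := π (F t' \ F t))
      linarith
    · rw [h1, add_sub_cancel_left]
      calc (π (F t' \ F t)).toReal ≤ (σ (F t' \ F t)).toReal := by
            apply ENNReal.toReal_mono
            · rw [σdiff t t' ht htt' ht1]
              exact (ENNReal.mul_lt_top ENNReal.ofReal_lt_top hfin.lt_top).ne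
            · exact hπσ _
        _ = (t' - t) * (σ A).toReal := by
            rw [σdiff t t' ht htt' ht1, ENNReal.toReal_mul,
              ENNReal.toReal_ofReal (by linarith)]
  have hcont : ContinuousOn φ (Set.Icc 0 1) := by
    apply LipschitzOnWith.continuousOn (K := (σ A).toNNReal)
    apply LipschitzOnWith.of_dist_le_mul
    intro x hx y hy
    have hK : ((σ A).toNNReal : ℝ) = (σ A).toReal := rfl
    rcases le_total x y with h | h
    · obtain ⟨h1, h2⟩ := hlip x y hx.1 h hy.2
      rw [Real.dist_eq, Real.dist_eq, abs_of_nonpos (by linarith), abs_of_nonpos (by linarith), hK]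
      nlinarith [ENNReal.toReal_nonneg (a := σ A)]
    · obtain ⟨h1, h2⟩ := hlip y x hy.1 h hx.2
      rw [Real.dist_eq, Real.dist_eq, abs_of_nonneg (by linarith), abs_of_nonneg (by linarith), hK]
      nlinarith [ENNReal.toReal_nonneg (a := σ A)]
  set ψ : ℝ → ℝ := fun t => φ (t + 2⁻¹) - φ t with hψ
  have hcontψ : ContinuousOn ψ (Set.Icc 0 2⁻¹) := by
    apply ContinuousOn.sub
    · apply hcont.comp ((continuous_id.add continuous_const).continuousOn)
      intro x hx
      have h1 := hx.1
      have h2 := hx.2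
      constructor
      · show 0 ≤ x + 2⁻¹
        linarith
      · show x + 2⁻¹ ≤ 1
        linarith
    · exact hcont.mono (Set.Icc_subset_Icc le_rfl (by norm_num))
  have hφ0 : φ 0 = 0 := by rw [hφ]; simp [F0]
  have hsum : ψ 0 + ψ 2⁻¹ = φ 1 := by
    rw [hψ]
    simp only
    rw [hφ0]
    norm_num
  have hv : φ 1 / 2 ∈ Set.uIcc (ψ 0) (ψ 2⁻¹) := by
    rcases le_total (ψ 0) (ψ 2⁻¹) with h | h
    · rw [Set.uIcc_of_le h]; constructor <;> linarith
    · rw [Set.uIcc_of_ge h]; constructor <;> linarith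
  have hIcc : Set.uIcc (0:ℝ) 2⁻¹ = Set.Icc 0 2⁻¹ := Set.uIcc_of_le (by norm_num)
  obtain ⟨t₀, ht₀mem, ht₀⟩ := intermediate_value_uIcc (by rwa [hIcc]) hv
  rw [hIcc] at ht₀mem
  obtain ⟨ht₀0, ht₀half⟩ := ht₀mem
  have hb1 : t₀ + 2⁻¹ ≤ 1 := by linarith
  have hb2 : t₀ ≤ t₀ + 2⁻¹ := by linarith
  set H := F (t₀ + 2⁻¹) \ F t₀ with hH
  have hHm : MeasurableSet H := (Fmeas _).diff (Fmeas _)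
  have hHs : H ⊆ A := Set.diff_subset.trans (FsubA _)
  -- π (F 1) = π A
  have hF1 : π (F 1) = π A ∧ π' (F 1) = π' A := by
    have h0 : σ (A \ F 1) = 0 := by
      rw [measure_diff (FsubA 1) (Fmeas 1).nullMeasurableSet
        ((measure_mono (FsubA 1)).trans_lt hfin.lt_top).ne, Fσ 1 zero_le_one le_rfl]
      simp
    have hπ0 : π (A \ F 1) = 0 := le_antisymm (le_trans (hπσ _) h0.le) zero_le
    have hπ'0 : π' (A \ F 1) = 0 := by
      have : π' (A \ F 1) ≤ σ (A \ F 1) := by rw [hσap]; exact le_add_self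
      exact le_antisymm (this.trans h0.le) zero_le
    constructor
    · conv_rhs => rw [← Set.union_diff_cancel (FsubA 1)]
      rw [measure_union Set.disjoint_sdiff_right (hA.diff (Fmeas 1)), hπ0, add_zero]
    · conv_rhs => rw [← Set.union_diff_cancel (FsubA 1)]
      rw [measure_union Set.disjoint_sdiff_right (hA.diff (Fmeas 1)), hπ'0, add_zero]
  have hφ1 : φ 1 = (π A).toReal := by rw [hφ]; simp only; rw [hF1.1]
  -- value of π H
  have hπHtoReal : (π H).toReal = (π A).toReal / 2 := by
    have hd := πdecomp π t₀ (t₀ + 2⁻¹) hb2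
    have h1 : (π (F (t₀ + 2⁻¹))).toReal = (π (F t₀)).toReal + (π H).toReal := by
      rw [hd, ENNReal.toReal_add (measure_ne_top _ _) (measure_ne_top _ _), hH]
    have h2 : ψ t₀ = (π H).toReal := by
      rw [hψ]; simp only; rw [hφ]; simp only; linarith
    rw [← h2, ht₀, hφ1]
  have hπH : π H = π A / 2 := by
    have h2 : (π A / 2).toReal = (π A).toReal / 2 := by
      rw [ENNReal.toReal_div]; norm_num
    refine (ENNReal.toReal_eq_toReal_iff' (measure_ne_top _ _) ?_).mp (by rw [hπHtoReal, h2])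
    exact (ENNReal.div_lt_top (measure_ne_top _ _) (by norm_num)).ne
  -- value of π' H
  have hσH : σ H = ENNReal.ofReal 2⁻¹ * σ A := by
    rw [hH]
    have := σdiff t₀ (t₀ + 2⁻¹) ht₀0 hb2 hb1
    simpa using this
  have hσAtoReal : (σ A).toReal = (π A).toReal + (π' A).toReal := by
    rw [hσap, ENNReal.toReal_add (measure_ne_top _ _) (measure_ne_top _ _)]
  have hπ'HtoReal : (π' H).toReal = (π' A).toReal / 2 := by
    have h1 : σ H = π H + π' H := hσap H
    have h2 : (σ H).toReal = (π H).toReal + (π' H).toReal := by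
      rw [h1, ENNReal.toReal_add (measure_ne_top _ _) (measure_ne_top _ _)]
    have h3 : (σ H).toReal = 2⁻¹ * (σ A).toReal := by
      rw [hσH, ENNReal.toReal_mul, ENNReal.toReal_ofReal (by norm_num)]
    rw [h3, hσAtoReal] at h2
    rw [hπHtoReal] at h2
    linarith
  have hπ'H : π' H = π' A / 2 := by
    have h2 : (π' A / 2).toReal = (π' A).toReal / 2 := by
      rw [ENNReal.toReal_div]; norm_num
    refine (ENNReal.toReal_eq_toReal_iff' (measure_ne_top _ _) ?_).mp (by rw [hπ'HtoReal, h2])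
    exact (ENNReal.div_lt_top (measure_ne_top _ _) (by norm_num)).ne
  exact ⟨H, hHm, hHs, hπH, hπ'H⟩

lemma nonatomicOn_aux {μ ν : Measure Ω} [IsFiniteMeasure μ] [IsFiniteMeasure ν]
    (hμ : NonatomicOn μ m) : ∀ E, MeasurableSet E → 0 < μ E →
    ∃ F, MeasurableSet F ∧ F ⊆ E ∧ 0 < (μ + ν) F ∧ (μ + ν) F < (μ + ν) E := by
  intro E hE hpos
  obtain ⟨F, hFm, hFs, hF0, hFlt⟩ := hμ E hE hpos
  have happ : ∀ s : Set Ω, (μ + ν) s = μ s + ν s := fun s => rfl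
  refine ⟨F, hFm, hFs, ?_, ?_⟩
  · rw [happ]
    exact lt_of_lt_of_le hF0 le_self_add
  · have hdiff : 0 < μ (E \ F) := by
      rw [measure_diff hFs hFm.nullMeasurableSet (measure_ne_top _ _)]
      exact tsub_pos_of_lt hFlt
    have hdiff2 : 0 < (μ + ν) (E \ F) :=
      lt_of_lt_of_le hdiff (by rw [happ]; exact le_self_add)
    have hdecomp : (μ + ν) E = (μ + ν) F + (μ + ν) (E \ F) := by
      conv_lhs => rw [← Set.union_diff_cancel hFs]
      exact measure_union Set.disjoint_sdiff_right (hE.diff hFm)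
    rw [hdecomp]
    exact ENNReal.lt_add_right (measure_ne_top _ _) hdiff2.ne'

lemma nonatomicOn_add {μ ν : Measure Ω} [IsFiniteMeasure μ] [IsFiniteMeasure ν]
    (hμ : NonatomicOn μ m) (hν : NonatomicOn ν m) : NonatomicOn (μ + ν) m := by
  intro E hE hpos
  rcases eq_or_ne (μ E) 0 with h0 | h0
  · have hν0 : 0 < ν E := by
      have happ : (μ + ν) E = μ E + ν E := rfl
      rw [happ, h0, zero_add] at hpos
      exact hpos
    obtain ⟨F, h1, h2, h3, h4⟩ := nonatomicOn_aux (ν := μ) hν E hE hν0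
    rw [add_comm μ ν]
    exact ⟨F, h1, h2, h3, h4⟩
  · exact nonatomicOn_aux hμ E hE (pos_iff_ne_zero.mpr h0)

end Helpers

theorem stmt13 {Ω : Type*} [m : MeasurableSpace Ω]
    (π π' : MeasureTheory.Measure Ω)
    (hπ : MeasureTheory.IsProbabilityMeasure π)
    (hπ' : MeasureTheory.IsProbabilityMeasure π')
    (hna : NonatomicOn π m) (hna' : NonatomicOn π' m) :
    ∃ E : (k : ℕ) → Fin (2 ^ k) → Set Ω,
      (∀ k j, MeasurableSet (E k j)) ∧
      (∀ k, ∀ j j' : Fin (2 ^ k), j ≠ j' → Disjoint (E k j) (E k j')) ∧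
      (∀ k, (⋃ j, E k j) = Set.univ) ∧
      (∀ k, ∀ j : Fin (2 ^ (k + 1)), ∃ j' : Fin (2 ^ k), E (k + 1) j ⊆ E k j') ∧
      (∀ k j, π (E k j) = 1 / 2 ^ k ∧ π' (E k j) = 1 / 2 ^ k) := by
  classical
  have hσna : NonatomicOn (π + π') m := nonatomicOn_add hna hna'
  have halve_all : ∀ A : Set Ω, MeasurableSet A →
      ∃ H, MeasurableSet H ∧ H ⊆ A ∧ π H = π A / 2 ∧ π' H = π' A / 2 :=
    fun A hA => halve_s13 hA (dyadic_family hσna hA (measure_ne_top _ _))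
  have hhalf : ∀ A : Set Ω, ∃ H, MeasurableSet H ∧ H ⊆ A ∧
      (MeasurableSet A → π H = π A / 2 ∧ π' H = π' A / 2) := by
    intro A
    by_cases hA : MeasurableSet A
    · obtain ⟨H, h1, h2, h3, h4⟩ := halve_all A hA
      exact ⟨H, h1, h2, fun _ => ⟨h3, h4⟩⟩
    · exact ⟨∅, MeasurableSet.empty, Set.empty_subset _, fun h => absurd h hA⟩
  choose h hm hs hv using hhalf
  set e : ℕ → ℕ → Set Ω := fun k => Nat.rec (motive := fun _ => ℕ → Set Ω)
    (fun _ => Set.univ)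
    (fun _ ek j => if j % 2 = 0 then h (ek (j / 2)) else ek (j / 2) \ h (ek (j / 2))) k
    with he
  have e0 : ∀ j, e 0 j = Set.univ := fun j => rfl
  have esucc : ∀ k j, e (k + 1) j =
      if j % 2 = 0 then h (e k (j / 2)) else e k (j / 2) \ h (e k (j / 2)) := fun k j => rfl
  have emeas : ∀ k j, MeasurableSet (e k j) := by
    intro k
    induction k with
    | zero => intro j; rw [e0]; exact MeasurableSet.univ
    | succ k ih =>
      intro j
      rw [esucc]
      split
      · exact hm _
      · exact (ih _).diff (hm _)
  have half_pow : ∀ k : ℕ, (1 : ℝ≥0∞) / 2 ^ k / 2 = 1 / 2 ^ (k + 1) := by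
    intro k
    rw [← two_halves 1 k, mul_comm, mul_div_assoc,
      ENNReal.div_self (by norm_num) (by norm_num), mul_one]
  have hfin : ∀ k : ℕ, (1 : ℝ≥0∞) / 2 ^ (k + 1) ≠ ∞ :=
    fun k => (ENNReal.div_lt_top one_ne_top (by positivity)).ne
  have sub_pow : ∀ k : ℕ, (1 : ℝ≥0∞) / 2 ^ k - 1 / 2 ^ (k + 1) = 1 / 2 ^ (k + 1) := by
    intro k
    rw [← two_halves 1 k, two_mul]
    rw [ENNReal.add_sub_cancel_right (hfin k)]
  have emes : ∀ k j, j < 2 ^ k → π (e k j) = 1 / 2 ^ k ∧ π' (e k j) = 1 / 2 ^ k := by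
    intro k
    induction k with
    | zero =>
      intro j hj
      interval_cases j
      rw [e0]
      simp [hπ.measure_univ, hπ'.measure_univ]
    | succ k ih =>
      intro j hj
      have hp : j / 2 < 2 ^ k := by
        have : 2 ^ (k + 1) = 2 * 2 ^ k := by rw [pow_succ]; ring
        omega
      obtain ⟨ih1, ih2⟩ := ih (j / 2) hp
      obtain ⟨hv1, hv2⟩ := hv (e k (j / 2)) (emeas k (j / 2))
      rw [esucc]
      split
      · rw [hv1, hv2, ih1, ih2, half_pow]
        exact ⟨rfl, rfl⟩
      · rw [measure_diff (hs _) (hm _).nullMeasurableSet (measure_ne_top _ _),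
          measure_diff (hs _) (hm _).nullMeasurableSet (measure_ne_top _ _),
          hv1, hv2, ih1, ih2, half_pow, sub_pow]
        exact ⟨rfl, rfl⟩
  have esub : ∀ k j, e (k + 1) j ⊆ e k (j / 2) := by
    intro k j
    rw [esucc]
    split
    · exact hs _
    · exact Set.diff_subset
  have edisj : ∀ k j j', j < 2 ^ k → j' < 2 ^ k → j ≠ j' →
      Disjoint (e k j) (e k j') := by
    intro k
    induction k with
    | zero => intro j j' hj hj' hne; omega
    | succ k ih =>
      intro j j' hj hj' hne
      have h2 : 2 ^ (k + 1) = 2 * 2 ^ k := by rw [pow_succ]; ring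
      by_cases hpp : j / 2 = j' / 2
      · -- siblings
        rw [esucc, esucc, hpp]
        rcases Nat.even_or_odd j with ⟨a, ha⟩ | ⟨a, ha⟩
        · have hj2 : j % 2 = 0 := by omega
          have hj'2 : j' % 2 ≠ 0 := by omega
          rw [if_pos hj2, if_neg hj'2]
          exact Set.disjoint_sdiff_right
        · have hj2 : j % 2 ≠ 0 := by omega
          have hj'2 : j' % 2 = 0 := by omega
          rw [if_neg hj2, if_pos hj'2]
          exact Set.disjoint_sdiff_left
      · exact (ih (j / 2) (j' / 2) (by omega) (by omega) hpp).mono (esub k j) (esub k j')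
  have ecover : ∀ k, ∀ x : Ω, ∃ j, j < 2 ^ k ∧ x ∈ e k j := by
    intro k
    induction k with
    | zero => intro x; exact ⟨0, by norm_num, by rw [e0]; trivial⟩
    | succ k ih =>
      intro x
      obtain ⟨p, hp, hxp⟩ := ih x
      have h2 : 2 ^ (k + 1) = 2 * 2 ^ k := by rw [pow_succ]; ring
      by_cases hx : x ∈ h (e k p)
      · refine ⟨2 * p, by omega, ?_⟩
        rw [esucc]
        have h1 : (2 * p) % 2 = 0 := by omega
        have h3 : (2 * p) / 2 = p := by omega
        rw [if_pos h1, h3]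
        exact hx
      · refine ⟨2 * p + 1, by omega, ?_⟩
        rw [esucc]
        have h1 : (2 * p + 1) % 2 ≠ 0 := by omega
        have h3 : (2 * p + 1) / 2 = p := by omega
        rw [if_neg h1, h3]
        exact ⟨hxp, hx⟩
  refine ⟨fun k j => e k j.1, fun k j => emeas k j.1, ?_, ?_, ?_, fun k j => emes k j.1 j.2⟩
  · intro k j j' hne
    exact edisj k j.1 j'.1 j.2 j'.2 (fun hh => hne (Fin.ext hh))
  · intro k
    ext x
    simp only [Set.mem_iUnion, Set.mem_univ, iff_true]
    obtain ⟨j, hj, hx⟩ := ecover k x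
    exact ⟨⟨j, hj⟩, hx⟩
  · intro k j
    refine ⟨⟨j.1 / 2, ?_⟩, esub k j.1⟩
    have := j.2
    have h2 : 2 ^ (k + 1) = 2 * 2 ^ k := by rw [pow_succ]; ring
    omega
end
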